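/- arXiv:2602.03869 — 10 statements merged into one kernel-verified Lean document; each statement's English description precedes it below -/
import Mathlib

section
/- Fix x₀ ∈ (Fin n → ℝ) with D(x₀) ≠ 0. Then the following two conditions are equivalent: (i) for every ν ∈ {1,…,κ} and all vectors v, δ ∈ (Fin n → ℝ) such that Σ_{j=1}^{n} a_{μ,j}(x₀)·v_j = 0 for all μ ∈ {1,…,κ} and Σ_{j=1}^{n} a_{μ,j}(x₀)·δ_j = 0 for all μ ∈ {1,…,κ}, one has Σ_{i=1}^{n} Σ_{j=1}^{n} A^{(ν)}_{i,j}(x₀)·v_j·δ_i = 0; (ii) μ^{(ν)}_{i,j}(x₀) = 0 for every ν ∈ {1,…,κ} and all i, j ∈ {1,…,n−κ}. -/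
open Matrix BigOperators

/-- The index `κ + i` of `Fin n`, for `i : Fin (n - κ)`. -/
def shiftIdx {κ n : ℕ} (h : κ < n) (i : Fin (n - κ)) : Fin n :=
  ⟨κ + i.1, by have := i.2; omega⟩

/-- `D`: determinant of the `κ × κ` submatrix formed by the first `κ` columns of `a`. -/
noncomputable def detD {κ n : ℕ} (h : κ < n) (a : Matrix (Fin κ) (Fin n) ℝ) : ℝ :=
  Matrix.det (Matrix.of fun ν μ : Fin κ => a ν (Fin.castLE h.le μ))

/-- `D_r(ℓ)`: as `D`, but with the `r`-th column replaced by the `ℓ`-th column of `a`. -/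
noncomputable def detDr {κ n : ℕ} (h : κ < n) (a : Matrix (Fin κ) (Fin n) ℝ)
    (r : Fin κ) (ℓ : Fin n) : ℝ :=
  Matrix.det (Matrix.of fun ν μ : Fin κ => a ν (if μ = r then ℓ else Fin.castLE h.le μ))

/-- `D_{r,s}(ℓ,m)`: as `D`, but with the `r`-th and `s`-th columns replaced by the
`ℓ`-th and `m`-th columns of `a`. -/
noncomputable def detDrs {κ n : ℕ} (h : κ < n) (a : Matrix (Fin κ) (Fin n) ℝ)
    (r s : Fin κ) (ℓ m : Fin n) : ℝ :=
  Matrix.det (Matrix.of fun ν μ : Fin κ =>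
    a ν (if μ = r then ℓ else if μ = s then m else Fin.castLE h.le μ))

/-- The coefficients `μ_{i,j}` built from the constraint matrix `a` and a
skew-symmetric matrix `A`. -/
noncomputable def muCoef {κ n : ℕ} (h : κ < n) (a : Matrix (Fin κ) (Fin n) ℝ)
    (A : Matrix (Fin n) (Fin n) ℝ) (i j : Fin (n - κ)) : ℝ :=
  (∑ r : Fin κ,
      (A (Fin.castLE h.le r) (shiftIdx h j) * detDr h a r (shiftIdx h i)
        - A (Fin.castLE h.le r) (shiftIdx h i) * detDr h a r (shiftIdx h j)))
    - A (shiftIdx h i) (shiftIdx h j) * detD h a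
    - ∑ r : Fin κ, ∑ s : Fin κ,
        if r < s then
          A (Fin.castLE h.le r) (Fin.castLE h.le s)
            * detDrs h a r s (shiftIdx h i) (shiftIdx h j)
        else 0

/-- The skew-symmetric matrix `A^{(ν)}(x)` with entries
`A^{(ν)}_{i,j}(x) = ∂a_{ν,i}/∂x_j(x) − ∂a_{ν,j}/∂x_i(x)`. -/
noncomputable def Amat {κ n : ℕ} (a : (Fin n → ℝ) → Matrix (Fin κ) (Fin n) ℝ)
    (x : Fin n → ℝ) (ν : Fin κ) : Matrix (Fin n) (Fin n) ℝ :=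
  fun i j => fderiv ℝ (fun y => a y ν i) x (Pi.single j 1)
    - fderiv ℝ (fun y => a y ν j) x (Pi.single i 1)

section Helpers
variable {κ n : ℕ} (h : κ < n) (a : Matrix (Fin κ) (Fin n) ℝ)

/-- The base κ×κ submatrix. -/
noncomputable def Msub : Matrix (Fin κ) (Fin κ) ℝ :=
  Matrix.of fun ν μ : Fin κ => a ν (Fin.castLE h.le μ)

lemma detD_eq : detD h a = (Msub h a).det := rfl

lemma detDr_eq (r : Fin κ) (ℓ : Fin n) :
    detDr h a r ℓ = ((Msub h a).updateCol r (fun ν => a ν ℓ)).det := by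
  unfold detDr Msub
  congr 1
  ext ν μ
  by_cases hm : μ = r <;> simp [Matrix.updateCol_apply, hm]

lemma detDrs_eq (r s : Fin κ) (hrs : r ≠ s) (ℓ m : Fin n) :
    detDrs h a r s ℓ m
      = (((Msub h a).updateCol r (fun ν => a ν ℓ)).updateCol s (fun ν => a ν m)).det := by
  unfold detDrs Msub
  congr 1
  ext ν μ
  rcases eq_or_ne μ r with hr | hr
  · subst hr; simp [Matrix.updateCol_apply, hrs]
  · rcases eq_or_ne μ s with hs | hs
    · subst hs; simp [Matrix.updateCol_apply, hrs.symm]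
    · simp [Matrix.updateCol_apply, hr, hs]

/-- linearity of det in a column, as a sum. -/
lemma det_updateCol_lin (A : Matrix (Fin κ) (Fin κ) ℝ) (j : Fin κ)
    (c : Fin κ → ℝ) (F : Fin κ → Fin κ → ℝ) :
    (A.updateCol j (fun k => ∑ i, c i * F i k)).det
      = ∑ i, c i * (A.updateCol j (F i)).det := by
  let L : (Fin κ → ℝ) →ₗ[ℝ] ℝ :=
    { toFun := fun b => (A.updateCol j b).det
      map_add' := Matrix.det_updateCol_add A j
      map_smul' := fun s u => Matrix.det_updateCol_smul A j s u }
  have : (fun k => ∑ i, c i * F i k) = ∑ i, c i • F i := by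
    funext k; simp [Finset.sum_apply]
  rw [this]
  have h1 := map_sum L (fun i => c i • F i) Finset.univ
  have h2 : ∀ i, L (c i • F i) = c i * L (F i) := fun i => by
    simp only [LinearMap.map_smul, smul_eq_mul]
  simp only [h2] at h1
  exact h1

end Helpers
section Cramer
variable {κ : ℕ}

lemma det_update_mulVec (M : Matrix (Fin κ) (Fin κ) ℝ) (r : Fin κ) (c : Fin κ → ℝ) :
    (M.updateCol r (M *ᵥ c)).det = M.det * c r := by
  have : (M *ᵥ c) = fun k => ∑ i, c i • M k i := by
    funext k; simp [Matrix.mulVec, dotProduct, mul_comm]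
  rw [this, Matrix.det_updateCol_sum, smul_eq_mul, mul_comm]

lemma det_update2_mulVec (M : Matrix (Fin κ) (Fin κ) ℝ) (r s : Fin κ) (hrs : r ≠ s)
    (c d : Fin κ → ℝ) :
    ((M.updateCol r (M *ᵥ c)).updateCol s (M *ᵥ d)).det
      = M.det * (c r * d s - c s * d r) := by
  set N := M.updateCol r (M *ᵥ c) with hN
  have hMd : (M *ᵥ d) = fun k => ∑ i, d i * (fun k' => M k' i) k := by
    funext k; simp [Matrix.mulVec, dotProduct, mul_comm]
  rw [hMd, det_updateCol_lin]
  have key : ∀ i : Fin κ, (N.updateCol s fun k' => M k' i).det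
      = (if i = s then M.det * c r else 0) + (if i = r then -(M.det * c s) else 0) := by
    intro i
    rcases eq_or_ne i s with rfl | his
    · have hcol : (fun k' => M k' i) = fun k' => N k' i := by
        funext k'; simp [hN, Matrix.updateCol_apply, Ne.symm hrs]
      rw [hcol, Matrix.updateCol_eq_self, hN, det_update_mulVec]
      simp [Ne.symm hrs]
    · rcases eq_or_ne i r with rfl | hir
      · have hcomm : N.updateCol s (fun k' => M k' i)
            = (M.updateCol s (fun k' => M k' i)).updateCol i (M *ᵥ c) := by
          ext ν μ
          rcases eq_or_ne μ s with rfl | h1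
          · simp [hN, Matrix.updateCol_apply, Ne.symm hrs]
          · rcases eq_or_ne μ i with rfl | h2
            · simp [hN, Matrix.updateCol_apply, hrs, h1]
            · simp [hN, Matrix.updateCol_apply, h1, h2]
        rw [hcomm]
        set P := M.updateCol s (fun k' => M k' i) with hP
        have hMc : (M *ᵥ c) = fun k => ∑ j, c j * (fun k' => M k' j) k := by
          funext k; simp [Matrix.mulVec, dotProduct, mul_comm]
        rw [hMc, det_updateCol_lin]
        have key2 : ∀ j : Fin κ, (P.updateCol i fun k' => M k' j).det
            = if j = s then -M.det else 0 := by
          intro j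
          rcases eq_or_ne j s with rfl | hjs
          · have : P.updateCol i (fun k' => M k' j)
                = M.submatrix id (Equiv.swap i j) := by
              ext ν μ
              rcases eq_or_ne μ i with rfl | h1
              · simp [hP, Matrix.updateCol_apply, Equiv.swap_apply_left]
              · rcases eq_or_ne μ j with rfl | h2
                · simp [hP, Matrix.updateCol_apply, Ne.symm hrs,
                    Equiv.swap_apply_right]
                · simp [hP, Matrix.updateCol_apply, h1, h2,
                    Equiv.swap_apply_of_ne_of_ne h1 h2]
            rw [this, Matrix.det_permute', if_pos rfl]
            simp [Equiv.Perm.sign_swap hrs]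
          · rcases eq_or_ne j i with rfl | hjr
            · refine (Matrix.det_zero_of_column_eq hrs (fun k => ?_)).trans (by simp [hjs])
              simp [hP, Matrix.updateCol_apply, hrs, Ne.symm hrs]
            · refine (Matrix.det_zero_of_column_eq (Ne.symm hjr) (fun k => ?_)).trans
                (by simp [hjs, hjr])
              simp [hP, Matrix.updateCol_apply, hjr, hjs, Ne.symm hjr]
        simp only [key2, mul_ite, mul_zero]
        rw [Finset.sum_ite_eq']
        simp [hrs]
        ring
      · refine (Matrix.det_zero_of_column_eq his (fun k => ?_)).trans (by simp [his, hir])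
        simp [hN, Matrix.updateCol_apply, his, hir]
  simp only [key, mul_add]
  rw [Finset.sum_add_distrib]
  simp only [mul_ite, mul_zero, mul_neg]
  rw [Finset.sum_ite_eq', Finset.sum_ite_eq']
  simp
  ring

end Cramer
section Kernel
variable {κ n : ℕ}

/-- Split a sum over `Fin n` into the first `κ` and the last `n - κ` indices. -/
lemma sum_split (h : κ < n) (f : Fin n → ℝ) :
    ∑ q, f q = (∑ r : Fin κ, f (Fin.castLE h.le r)) + ∑ i : Fin (n - κ), f (shiftIdx h i) := by
  rw [← Equiv.sum_comp (finSumFinEquiv.trans (finCongr (by omega : κ + (n - κ) = n))) f,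
    Fintype.sum_sum_type]
  congr 1

lemma fin_cases' (h : κ < n) (q : Fin n) :
    (∃ r : Fin κ, q = Fin.castLE h.le r) ∨ ∃ m : Fin (n - κ), q = shiftIdx h m := by
  by_cases hq : q.1 < κ
  · exact Or.inl ⟨⟨q.1, hq⟩, by simp [Fin.ext_iff]⟩
  · exact Or.inr ⟨⟨q.1 - κ, by omega⟩, by simp [shiftIdx, Fin.ext_iff]; omega⟩

variable (h : κ < n) (a : Matrix (Fin κ) (Fin n) ℝ)

/-- Coefficients expressing column `ℓ` of `a` in terms of the first `κ` columns. -/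
noncomputable def coefv (ℓ : Fin n) : Fin κ → ℝ :=
  (Msub h a)⁻¹ *ᵥ fun ν => a ν ℓ

variable (hD : detD h a ≠ 0)
include hD

lemma mulVec_coefv (ℓ : Fin n) : (Msub h a) *ᵥ coefv h a ℓ = fun ν => a ν ℓ := by
  have hDet : IsUnit (Msub h a).det := isUnit_iff_ne_zero.2 (by rw [← detD_eq]; exact hD)
  rw [coefv, Matrix.mulVec_mulVec, Matrix.mul_nonsing_inv _ hDet, Matrix.one_mulVec]

lemma cramer_constraint (μ : Fin κ) (ℓ : Fin n) :
    ∑ r, a μ (Fin.castLE h.le r) * coefv h a ℓ r = a μ ℓ := by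
  have := congrFun (mulVec_coefv h a hD ℓ) μ
  simpa [Matrix.mulVec, dotProduct, Msub] using this

lemma detDr_coefv (r : Fin κ) (ℓ : Fin n) :
    detDr h a r ℓ = detD h a * coefv h a ℓ r := by
  rw [detDr_eq, ← mulVec_coefv h a hD ℓ, det_update_mulVec, detD_eq]

lemma detDrs_coefv (r s : Fin κ) (hrs : r ≠ s) (ℓ m : Fin n) :
    detDrs h a r s ℓ m
      = detD h a * (coefv h a ℓ r * coefv h a m s - coefv h a ℓ s * coefv h a m r) := by
  rw [detDrs_eq h a r s hrs, ← mulVec_coefv h a hD ℓ, ← mulVec_coefv h a hD m,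
    det_update2_mulVec _ _ _ hrs, detD_eq]

omit hD

/-- Basis vectors of the kernel of the constraints. -/
noncomputable def wvec (i : Fin (n - κ)) : Fin n → ℝ := fun q =>
  if hq : q.1 < κ then -coefv h a (shiftIdx h i) ⟨q.1, hq⟩
  else if q.1 = κ + i.1 then 1 else 0

lemma wvec_castLE (i : Fin (n - κ)) (r : Fin κ) :
    wvec h a i (Fin.castLE h.le r) = -coefv h a (shiftIdx h i) r := by
  simp [wvec]

lemma wvec_shift (i m : Fin (n - κ)) :
    wvec h a i (shiftIdx h m) = if m = i then 1 else 0 := by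
  have : ¬ (κ + m.1 < κ) := by omega
  simp only [wvec, shiftIdx, this, dif_neg]
  by_cases hmi : m = i
  · simp [hmi]
  · have : ¬ (κ + m.1 = κ + i.1) := by
      simp [Fin.ext_iff] at hmi; omega
    simp [hmi, this]; exact fun h' => hmi (Fin.ext h')

include hD in
lemma wvec_constraint (i : Fin (n - κ)) (μ : Fin κ) :
    ∑ q, a μ q * wvec h a i q = 0 := by
  rw [sum_split h]
  have h1 : ∀ r : Fin κ, a μ (Fin.castLE h.le r) * wvec h a i (Fin.castLE h.le r)
      = -(a μ (Fin.castLE h.le r) * coefv h a (shiftIdx h i) r) := by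
    intro r; rw [wvec_castLE]; ring
  have h2 : ∀ m : Fin (n - κ), a μ (shiftIdx h m) * wvec h a i (shiftIdx h m)
      = if m = i then a μ (shiftIdx h i) else 0 := by
    intro m; rw [wvec_shift]
    by_cases hmi : m = i <;> simp [hmi]
  simp only [h1, h2, Finset.sum_neg_distrib, Finset.sum_ite_eq']
  rw [cramer_constraint h a hD]
  simp

end Kernel
section MuB
variable {κ n : ℕ}

/-- For a skew matrix `G` on `Fin κ`, pairing identity. -/
lemma skew_pair (G : Matrix (Fin κ) (Fin κ) ℝ) (hG : ∀ p q, G q p = -G p q)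
    (c d : Fin κ → ℝ) :
    ∑ r, ∑ s, G r s * d s * c r
      = ∑ r, ∑ s, if r < s then G r s * (c r * d s - c s * d r) else 0 := by
  have expand : ∀ r s : Fin κ, G r s * d s * c r
      = (if r < s then G r s * c r * d s else 0) + (if s < r then G r s * c r * d s else 0) := by
    intro r s
    rcases lt_trichotomy r s with hlt | heq | hgt
    · simp [hlt, not_lt_of_gt hlt]; ring
    · subst heq
      have : G r r = 0 := by have := hG r r; linarith
      simp [this]
    · simp [hgt, not_lt_of_gt hgt]; ring
  have rhs_expand : ∀ r s : Fin κ, (if r < s then G r s * (c r * d s - c s * d r) else 0)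
      = (if r < s then G r s * c r * d s else 0) - (if r < s then G r s * c s * d r else 0) := by
    intro r s; split_ifs <;> ring
  have flip : ∑ r, ∑ s, (if s < r then G r s * c r * d s else 0)
      = -∑ r, ∑ s, (if r < s then G r s * c s * d r else 0) := by
    rw [Finset.sum_comm, ← Finset.sum_neg_distrib]
    apply Finset.sum_congr rfl; intro s _
    rw [← Finset.sum_neg_distrib]
    apply Finset.sum_congr rfl; intro r _
    split_ifs with hsr
    · rw [hG r s]; ring
    · ring
  simp only [expand, rhs_expand, Finset.sum_add_distrib, Finset.sum_sub_distrib]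
  rw [flip]
  ring

variable (h : κ < n) (a : Matrix (Fin κ) (Fin n) ℝ) (A : Matrix (Fin n) (Fin n) ℝ)

/-- Closed form of the bilinear pairing on basis kernel vectors. -/
lemma B_closed (i j : Fin (n - κ)) :
    ∑ p, ∑ q, A p q * wvec h a j q * wvec h a i p
      = (∑ r, ∑ s, A (Fin.castLE h.le r) (Fin.castLE h.le s)
            * coefv h a (shiftIdx h j) s * coefv h a (shiftIdx h i) r)
        - (∑ r, A (Fin.castLE h.le r) (shiftIdx h j) * coefv h a (shiftIdx h i) r)
        - (∑ s, A (shiftIdx h i) (Fin.castLE h.le s) * coefv h a (shiftIdx h j) s)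
        + A (shiftIdx h i) (shiftIdx h j) := by
  rw [sum_split h]
  have inner : ∀ p : Fin n, ∑ q, A p q * wvec h a j q * wvec h a i p
      = (∑ s : Fin κ, A p (Fin.castLE h.le s) * wvec h a j (Fin.castLE h.le s) * wvec h a i p)
        + ∑ m : Fin (n - κ), A p (shiftIdx h m) * wvec h a j (shiftIdx h m) * wvec h a i p :=
    fun p => sum_split h _
  simp only [inner]
  rw [Finset.sum_add_distrib, Finset.sum_add_distrib]
  have e1 : ∀ r : Fin κ, ∀ s : Fin κ,
      A (Fin.castLE h.le r) (Fin.castLE h.le s) * wvec h a j (Fin.castLE h.le s)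
          * wvec h a i (Fin.castLE h.le r)
        = A (Fin.castLE h.le r) (Fin.castLE h.le s)
            * coefv h a (shiftIdx h j) s * coefv h a (shiftIdx h i) r := by
    intro r s; rw [wvec_castLE, wvec_castLE]; ring
  have e2 : ∀ r : Fin κ, ∑ m : Fin (n - κ),
      A (Fin.castLE h.le r) (shiftIdx h m) * wvec h a j (shiftIdx h m)
        * wvec h a i (Fin.castLE h.le r)
      = -(A (Fin.castLE h.le r) (shiftIdx h j) * coefv h a (shiftIdx h i) r) := by
    intro r
    have : ∀ m : Fin (n - κ), A (Fin.castLE h.le r) (shiftIdx h m) * wvec h a j (shiftIdx h m)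
        * wvec h a i (Fin.castLE h.le r)
        = if m = j then -(A (Fin.castLE h.le r) (shiftIdx h j) * coefv h a (shiftIdx h i) r)
          else 0 := by
      intro m; rw [wvec_shift, wvec_castLE]
      by_cases hm : m = j
      · subst hm; simp; try ring
      · simp [hm]
    simp only [this, Finset.sum_ite_eq', Finset.mem_univ, if_pos]
  have e3 : ∀ m : Fin (n - κ), ∑ s : Fin κ,
      A (shiftIdx h m) (Fin.castLE h.le s) * wvec h a j (Fin.castLE h.le s)
        * wvec h a i (shiftIdx h m)
      = if m = i then -(∑ s : Fin κ, A (shiftIdx h i) (Fin.castLE h.le s)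
          * coefv h a (shiftIdx h j) s) else 0 := by
    intro m
    by_cases hm : m = i
    · rw [hm, if_pos rfl, ← Finset.sum_neg_distrib]
      apply Finset.sum_congr rfl; intro s _
      rw [wvec_castLE, wvec_shift h a i i, if_pos rfl]; ring
    · rw [if_neg hm]
      apply Finset.sum_eq_zero; intro s _
      rw [wvec_shift h a i m, if_neg hm]; ring
  have e4 : ∀ m : Fin (n - κ), ∑ m2 : Fin (n - κ),
      A (shiftIdx h m) (shiftIdx h m2) * wvec h a j (shiftIdx h m2) * wvec h a i (shiftIdx h m)
      = if m = i then A (shiftIdx h i) (shiftIdx h j) else 0 := by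
    intro m
    by_cases hm : m = i
    · rw [hm, if_pos rfl]
      have key4 : ∀ m2 : Fin (n - κ),
          A (shiftIdx h i) (shiftIdx h m2) * wvec h a j (shiftIdx h m2)
            * wvec h a i (shiftIdx h i)
          = if m2 = j then A (shiftIdx h i) (shiftIdx h j) else 0 := by
        intro m2
        rw [wvec_shift h a j m2, wvec_shift h a i i]
        by_cases hm2 : m2 = j
        · simp [hm2]
        · simp [hm2]
      simp only [key4, Finset.sum_ite_eq', Finset.mem_univ, if_pos]
    · rw [if_neg hm]
      apply Finset.sum_eq_zero; intro m2 _
      rw [wvec_shift h a i m, if_neg hm]; ring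
  rw [Finset.sum_congr rfl fun r _ => Finset.sum_congr rfl (fun s _ => e1 r s),
    Finset.sum_congr rfl fun r _ => e2 r,
    Finset.sum_congr rfl fun m _ => e3 m,
    Finset.sum_congr rfl fun m _ => e4 m]
  simp only [Finset.sum_ite_eq', Finset.mem_univ, if_pos, Finset.sum_neg_distrib]
  ring

end MuB
section MuEq
variable {κ n : ℕ} (h : κ < n) (a : Matrix (Fin κ) (Fin n) ℝ) (A : Matrix (Fin n) (Fin n) ℝ)

lemma mu_eq (hD : detD h a ≠ 0) (hA : ∀ p q, A q p = -A p q) (i j : Fin (n - κ)) :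
    muCoef h a A i j
      = -(detD h a) * ∑ p, ∑ q, A p q * wvec h a j q * wvec h a i p := by
  set D := detD h a with hDdef
  set ci := coefv h a (shiftIdx h i) with hci
  set cj := coefv h a (shiftIdx h j) with hcj
  rw [B_closed h a A i j]
  unfold muCoef
  simp only [detDr_coefv h a hD, ← hDdef, ← hci, ← hcj]
  have hifterm : ∀ r s : Fin κ,
      (if r < s then A (Fin.castLE h.le r) (Fin.castLE h.le s)
          * detDrs h a r s (shiftIdx h i) (shiftIdx h j) else 0)
      = if r < s then A (Fin.castLE h.le r) (Fin.castLE h.le s)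
          * (D * (ci r * cj s - ci s * cj r)) else 0 := by
    intro r s
    split_ifs with hrs
    · rw [detDrs_coefv h a hD r s (ne_of_lt hrs), ← hDdef, ← hci, ← hcj]
    · rfl
  simp only [hifterm]
  have hsplit1 : ∑ r : Fin κ,
      (A (Fin.castLE h.le r) (shiftIdx h j) * (D * ci r)
        - A (Fin.castLE h.le r) (shiftIdx h i) * (D * cj r))
      = D * (∑ r : Fin κ, A (Fin.castLE h.le r) (shiftIdx h j) * ci r)
        - D * ∑ r : Fin κ, A (Fin.castLE h.le r) (shiftIdx h i) * cj r := by
    rw [Finset.sum_sub_distrib, Finset.mul_sum, Finset.mul_sum]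
    congr 1 <;> (apply Finset.sum_congr rfl; intro r _; ring)
  have hDout : ∑ r : Fin κ, ∑ s : Fin κ,
      (if r < s then A (Fin.castLE h.le r) (Fin.castLE h.le s)
        * (D * (ci r * cj s - ci s * cj r)) else 0)
      = D * ∑ r : Fin κ, ∑ s : Fin κ,
        (if r < s then A (Fin.castLE h.le r) (Fin.castLE h.le s)
          * (ci r * cj s - ci s * cj r) else 0) := by
    rw [Finset.mul_sum]
    apply Finset.sum_congr rfl; intro r _
    rw [Finset.mul_sum]
    apply Finset.sum_congr rfl; intro s _
    split_ifs with hrs <;> ring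
  have hS : ∑ r : Fin κ, ∑ s : Fin κ,
      A (Fin.castLE h.le r) (Fin.castLE h.le s) * cj s * ci r
      = ∑ r : Fin κ, ∑ s : Fin κ,
        (if r < s then A (Fin.castLE h.le r) (Fin.castLE h.le s)
          * (ci r * cj s - ci s * cj r) else 0) :=
    skew_pair (fun p q => A (Fin.castLE h.le p) (Fin.castLE h.le q))
      (fun p q => hA (Fin.castLE h.le p) (Fin.castLE h.le q)) ci cj
  have hQ : ∑ r : Fin κ, A (Fin.castLE h.le r) (shiftIdx h i) * cj r
      = -∑ s : Fin κ, A (shiftIdx h i) (Fin.castLE h.le s) * cj s := by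
    rw [← Finset.sum_neg_distrib]
    apply Finset.sum_congr rfl; intro r _
    rw [hA (shiftIdx h i) (Fin.castLE h.le r)]
    ring
  rw [hsplit1, hDout, ← hS, hQ]
  ring

end MuEq
section Span
variable {κ n : ℕ} (h : κ < n) (a : Matrix (Fin κ) (Fin n) ℝ)

lemma span_kernel (hD : detD h a ≠ 0) (v : Fin n → ℝ)
    (hv : ∀ μ : Fin κ, ∑ q, a μ q * v q = 0) :
    v = ∑ m : Fin (n - κ), v (shiftIdx h m) • wvec h a m := by
  set u : Fin n → ℝ :=
    fun q => v q - ∑ m : Fin (n - κ), v (shiftIdx h m) * wvec h a m q with hu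
  have ushift : ∀ m : Fin (n - κ), u (shiftIdx h m) = 0 := by
    intro m
    have : ∀ m2 : Fin (n - κ), v (shiftIdx h m2) * wvec h a m2 (shiftIdx h m)
        = if m = m2 then v (shiftIdx h m2) else 0 := by
      intro m2
      rw [wvec_shift h a m2 m]
      by_cases hm : m = m2 <;> simp [hm]
    simp only [hu, this, Finset.sum_ite_eq, Finset.mem_univ, if_pos, sub_self]
  have hcons : ∀ μ : Fin κ, ∑ q, a μ q * u q = 0 := by
    intro μ
    have expand : ∀ q, a μ q * u q
        = a μ q * v q - ∑ m : Fin (n - κ), v (shiftIdx h m) * (a μ q * wvec h a m q) := by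
      intro q
      rw [hu]
      simp only [mul_sub, Finset.mul_sum]
      congr 1
      apply Finset.sum_congr rfl; intro m _; ring
    simp only [expand, Finset.sum_sub_distrib]
    rw [hv μ, Finset.sum_comm]
    have : ∀ m : Fin (n - κ), ∑ q, v (shiftIdx h m) * (a μ q * wvec h a m q)
        = v (shiftIdx h m) * ∑ q, a μ q * wvec h a m q := by
      intro m; rw [Finset.mul_sum]
    simp only [this, wvec_constraint h a hD, mul_zero, Finset.sum_const_zero, sub_zero]
  have hcast : ∀ r : Fin κ, u (Fin.castLE h.le r) = 0 := by
    have hmul : (Msub h a) *ᵥ (fun r => u (Fin.castLE h.le r)) = 0 := by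
      funext μ
      have := hcons μ
      rw [sum_split h] at this
      simp only [ushift, mul_zero, Finset.sum_const_zero, add_zero] at this
      simpa [Matrix.mulVec, dotProduct, Msub] using this
    have hDet : IsUnit (Msub h a).det := isUnit_iff_ne_zero.2 (by rw [← detD_eq]; exact hD)
    have : (fun r => u (Fin.castLE h.le r)) = 0 := by
      have h1 := congrArg (fun w => (Msub h a)⁻¹ *ᵥ w) hmul
      simpa [Matrix.mulVec_mulVec, Matrix.nonsing_inv_mul _ hDet, Matrix.one_mulVec] using h1
    intro r; exact congrFun this r
  funext q
  have huq : u q = 0 := by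
    rcases fin_cases' h q with ⟨r, rfl⟩ | ⟨m, rfl⟩
    · exact hcast r
    · exact ushift m
  have : v q = ∑ m : Fin (n - κ), v (shiftIdx h m) * wvec h a m q := by
    have h2 : v q - ∑ m : Fin (n - κ), v (shiftIdx h m) * wvec h a m q = 0 := huq
    linarith
  simpa [Finset.sum_apply] using this

end Span

section BForm
variable {n : ℕ}

noncomputable def Bform (A : Matrix (Fin n) (Fin n) ℝ) :
    (Fin n → ℝ) →ₗ[ℝ] (Fin n → ℝ) →ₗ[ℝ] ℝ :=
  LinearMap.mk₂ ℝ (fun v δ => ∑ p, ∑ q, A p q * v q * δ p)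
    (fun v v' δ => by
      simp only [Pi.add_apply, mul_add, add_mul, Finset.sum_add_distrib])
    (fun c v δ => by
      simp only [Pi.smul_apply, smul_eq_mul, Finset.mul_sum]
      apply Finset.sum_congr rfl; intro p _
      apply Finset.sum_congr rfl; intro q _
      ring)
    (fun v δ δ' => by
      simp only [Pi.add_apply, mul_add, add_mul, Finset.sum_add_distrib])
    (fun c v δ => by
      simp only [Pi.smul_apply, smul_eq_mul, Finset.mul_sum]
      apply Finset.sum_congr rfl; intro p _
      apply Finset.sum_congr rfl; intro q _
      ring)

lemma Bform_apply (A : Matrix (Fin n) (Fin n) ℝ) (v δ : Fin n → ℝ) :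
    Bform A v δ = ∑ p, ∑ q, A p q * v q * δ p := rfl

end BForm
/-- Main theorem: for linear homogeneous constraints with coefficient matrix `a(x)`,
at a point `x₀` where `D(x₀) ≠ 0`, the condition
`Σ_{i,j} A^{(ν)}_{i,j}(x₀) v_j δ_i = 0` for all constraint-annihilated `v, δ` and all `ν`
holds if and only if all coefficients `μ^{(ν)}_{i,j}(x₀)` vanish. -/

theorem lagrangian_derivative_vanishes_iff_mu_zero
    (κ n : ℕ) (h : κ < n)
    (a : (Fin n → ℝ) → Matrix (Fin κ) (Fin n) ℝ)
    (ha : ∀ (ν : Fin κ) (j : Fin n), Differentiable ℝ (fun x => a x ν j))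
    (x₀ : Fin n → ℝ)
    (hD : detD h (a x₀) ≠ 0) :
    (∀ ν : Fin κ, ∀ v δ : Fin n → ℝ,
        (∀ μ : Fin κ, ∑ j, a x₀ μ j * v j = 0) →
        (∀ μ : Fin κ, ∑ j, a x₀ μ j * δ j = 0) →
        ∑ i, ∑ j, Amat a x₀ ν i j * v j * δ i = 0)
      ↔ (∀ ν : Fin κ, ∀ i j : Fin (n - κ), muCoef h (a x₀) (Amat a x₀ ν) i j = 0) := by
  constructor
  · intro H ν i j
    have hA : ∀ p q, Amat a x₀ ν q p = -(Amat a x₀ ν p q) := by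
      intro p q; simp only [Amat]; ring
    rw [mu_eq h (a x₀) (Amat a x₀ ν) hD hA i j]
    rw [H ν (wvec h (a x₀) j) (wvec h (a x₀) i)
      (wvec_constraint h (a x₀) hD j) (wvec_constraint h (a x₀) hD i), mul_zero]
  · intro H ν v δ hv hδ
    have hA : ∀ p q, Amat a x₀ ν q p = -(Amat a x₀ ν p q) := by
      intro p q; simp only [Amat]; ring
    have hB0 : ∀ m' m : Fin (n - κ),
        Bform (Amat a x₀ ν) (wvec h (a x₀) m') (wvec h (a x₀) m) = 0 := by
      intro m' m
      have h1 := H ν m m'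
      rw [mu_eq h (a x₀) (Amat a x₀ ν) hD hA m m'] at h1
      rcases mul_eq_zero.mp h1 with h2 | h2
      · exact absurd (neg_eq_zero.mp h2) hD
      · exact (Bform_apply _ _ _).trans h2
    have hvdec := span_kernel h (a x₀) hD v hv
    have hδdec := span_kernel h (a x₀) hD δ hδ
    have hfin : Bform (Amat a x₀ ν) v δ = 0 := by
      rw [hvdec, hδdec]
      simp only [map_sum, LinearMap.map_smul, LinearMap.sum_apply, LinearMap.smul_apply,
        smul_eq_mul, hB0, mul_zero, Finset.sum_const_zero]
    rw [← Bform_apply (Amat a x₀ ν) v δ]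
    exact hfin
end

section
/- For every t ∈ ℝ, δᵥg(t) − (d/dt)[δ꜀g](t) = Σ_{i=1}^{n} (∂g/∂v_i)(q(t), q'(t), t)·(ξ_i(t) − η_i'(t)) − Σ_{i=1}^{n} 𝒟ᵢg(t)·η_i(t). (This is the transposition rule relating the total variation, the Chetaev variation and the Lagrangian derivative of a constraint function along a motion.) -/
open BigOperators

variable {n : ℕ}

/-- Partial derivative of a constraint function `g(x, v, t)` with respect to `x_i`. -/
noncomputable def pdx (g : (Fin n → ℝ) × (Fin n → ℝ) × ℝ → ℝ) (i : Fin n)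
    (p : (Fin n → ℝ) × (Fin n → ℝ) × ℝ) : ℝ :=
  fderiv ℝ g p (Pi.single i 1, 0, 0)

/-- Partial derivative of a constraint function `g(x, v, t)` with respect to `v_i`. -/
noncomputable def pdv (g : (Fin n → ℝ) × (Fin n → ℝ) × ℝ → ℝ) (i : Fin n)
    (p : (Fin n → ℝ) × (Fin n → ℝ) × ℝ) : ℝ :=
  fderiv ℝ g p (0, Pi.single i 1, 0)

/-- The Chetaev variation `δ꜀g(t) = Σ_i (∂g/∂v_i)(q(t), q'(t), t) · η_i(t)`. -/
noncomputable def chetaevVar (g : (Fin n → ℝ) × (Fin n → ℝ) × ℝ → ℝ)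
    (q η : ℝ → Fin n → ℝ) (t : ℝ) : ℝ :=
  ∑ i, pdv g i (q t, deriv q t, t) * η t i

/-- The total variation
`δᵥg(t) = Σ_i (∂g/∂x_i)(q(t), q'(t), t) · η_i(t) + Σ_i (∂g/∂v_i)(q(t), q'(t), t) · ξ_i(t)`. -/
noncomputable def totalVar (g : (Fin n → ℝ) × (Fin n → ℝ) × ℝ → ℝ)
    (q η ξ : ℝ → Fin n → ℝ) (t : ℝ) : ℝ :=
  ∑ i, pdx g i (q t, deriv q t, t) * η t i + ∑ i, pdv g i (q t, deriv q t, t) * ξ t i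

/-- The Lagrangian derivative
`𝒟ᵢg(t) = (d/dt)[(∂g/∂v_i)(q(t), q'(t), t)] − (∂g/∂x_i)(q(t), q'(t), t)`. -/
noncomputable def lagD (g : (Fin n → ℝ) × (Fin n → ℝ) × ℝ → ℝ)
    (q : ℝ → Fin n → ℝ) (i : Fin n) (t : ℝ) : ℝ :=
  deriv (fun s => pdv g i (q s, deriv q s, s)) t - pdx g i (q t, deriv q t, t)

/-- The transposition rule: the difference between the total variation and the time
derivative of the Chetaev variation equals
`Σ_i (∂g/∂v_i)(ξ_i − η_i') − Σ_i 𝒟ᵢg · η_i`. -/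
theorem transposition_rule
    (g : (Fin n → ℝ) × (Fin n → ℝ) × ℝ → ℝ) (hg : ContDiff ℝ 2 g)
    (q : ℝ → Fin n → ℝ) (hq : ContDiff ℝ 2 q)
    (η ξ : ℝ → Fin n → ℝ) (hη : Differentiable ℝ η) (hξ : Differentiable ℝ ξ)
    (t : ℝ) :
    totalVar g q η ξ t - deriv (chetaevVar g q η) t
      = ∑ i, pdv g i (q t, deriv q t, t) * (ξ t i - deriv (fun s => η s i) t)
        - ∑ i, lagD g q i t * η t i := by
  have hq1 : Differentiable ℝ q := hq.differentiable two_ne_zero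
  have hq' : Differentiable ℝ (deriv q) := by
    have h2 : ContDiff ℝ ((1 : WithTop ℕ∞) + 1) q := by exact_mod_cast hq
    exact ((contDiff_succ_iff_deriv).mp h2).2.2.differentiable one_ne_zero
  have hc : Differentiable ℝ (fun s : ℝ => (q s, deriv q s, s)) :=
    hq1.prodMk (hq'.prodMk differentiable_id)
  have hfd : Differentiable ℝ (fderiv ℝ g) := by
    have : ContDiff ℝ 1 (fderiv ℝ g) := by
      apply hg.fderiv_right
      norm_num
    exact this.differentiable one_ne_zero
  have hA : ∀ i : Fin n, DifferentiableAt ℝ (fun s => pdv g i (q s, deriv q s, s)) t := by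
    intro i
    have : DifferentiableAt ℝ (fun s : ℝ => fderiv ℝ g (q s, deriv q s, s)) t :=
      (hfd _).comp t (hc t)
    exact this.clm_apply (differentiableAt_const _)
  have hηi : ∀ i : Fin n, DifferentiableAt ℝ (fun s => η s i) t := fun i =>
    (differentiable_pi.mp hη i) t
  have key : deriv (chetaevVar g q η) t
      = ∑ i, (deriv (fun s => pdv g i (q s, deriv q s, s)) t * η t i
          + pdv g i (q t, deriv q t, t) * deriv (fun s => η s i) t) := by
    have : chetaevVar g q η = fun s => ∑ i, pdv g i (q s, deriv q s, s) * η s i := rfl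
    rw [this, deriv_fun_sum (A := fun i s => pdv g i (q s, deriv q s, s) * η s i) (fun i _ => ((hA i).mul (hηi i)))]
    exact Finset.sum_congr rfl fun i _ => deriv_mul (hA i) (hηi i)
  rw [key]
  simp only [totalVar, lagD, sub_mul, mul_sub, Finset.sum_add_distrib,
    Finset.sum_sub_distrib]
  ring
end

section
/- Assume the commutation rule ξ(t) = η'(t) holds for all t ∈ ℝ and the Chetaev condition δ꜀g(t) = 0 holds for all t ∈ ℝ. Then for every t ∈ ℝ, δᵥg(t) = − Σ_{i=1}^{n} 𝒟ᵢg(t)·η_i(t) (the Hölder vakonomic variation identity). -/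
open BigOperators

variable {n : ℕ}

/-- Hölder vakonomic variation: if the commutation rule `ξ = η'` holds and the Chetaev
condition `δ꜀g = 0` holds identically, then `δᵥg(t) = − Σ_i 𝒟ᵢg(t) · η_i(t)`. -/
theorem holder_vakonomic_variation
    (g : (Fin n → ℝ) × (Fin n → ℝ) × ℝ → ℝ) (hg : ContDiff ℝ 2 g)
    (q : ℝ → Fin n → ℝ) (hq : ContDiff ℝ 2 q)
    (η ξ : ℝ → Fin n → ℝ) (hη : Differentiable ℝ η) (hξ : Differentiable ℝ ξ)
    (hcomm : ∀ t : ℝ, ξ t = deriv η t)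
    (hchet : ∀ t : ℝ, chetaevVar g q η t = 0)
    (t : ℝ) :
    totalVar g q η ξ t = - ∑ i, lagD g q i t * η t i := by
  -- differentiability of pdv g i as a function of p
  have hg' : ContDiff ℝ 1 (fderiv ℝ g) := hg.fderiv_right (by norm_num)
  have hpdv : ∀ i : Fin n, Differentiable ℝ (pdv g i) := by
    intro i
    have h := ((ContinuousLinearMap.apply ℝ ℝ ((0 : Fin n → ℝ), Pi.single i 1, (0:ℝ))).differentiable).comp
      (hg'.differentiable one_ne_zero)
    exact h
  -- differentiability of the curve s ↦ (q s, q' s, s)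
  have hq1 : Differentiable ℝ q := hq.differentiable (by norm_num)
  have hdq : Differentiable ℝ (deriv q) := by
    have h2 : (2 : WithTop ℕ∞) = 1 + 1 := by norm_num
    rw [h2] at hq
    exact ((contDiff_succ_iff_deriv.mp hq).2.2).differentiable one_ne_zero
  have hcurve : Differentiable ℝ (fun s : ℝ => (q s, deriv q s, s)) :=
    hq1.prodMk (hdq.prodMk differentiable_id)
  have hF : ∀ i : Fin n, Differentiable ℝ (fun s => pdv g i (q s, deriv q s, s)) :=
    fun i => (hpdv i).comp hcurve
  -- componentwise derivative of η
  have hηi : ∀ (i : Fin n) (s : ℝ), HasDerivAt (fun u => η u i) (deriv η s i) s := by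
    intro i s
    exact hasDerivAt_pi.mp (hη s).hasDerivAt i
  -- derivative of the (identically zero) Chetaev variation
  have hsum : HasDerivAt (fun s => ∑ i, pdv g i (q s, deriv q s, s) * η s i)
      (∑ i, (deriv (fun s => pdv g i (q s, deriv q s, s)) t * η t i
        + pdv g i (q t, deriv q t, t) * deriv η t i)) t := by
    apply HasDerivAt.fun_sum
    intro i _
    exact ((hF i t).hasDerivAt).mul (hηi i t)
  have hzero : (fun s => ∑ i, pdv g i (q s, deriv q s, s) * η s i) = fun _ : ℝ => (0:ℝ) := by
    funext s; exact hchet s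
  have hkey : (∑ i, (deriv (fun s => pdv g i (q s, deriv q s, s)) t * η t i
      + pdv g i (q t, deriv q t, t) * deriv η t i)) = 0 := by
    have h0 : HasDerivAt (fun _ : ℝ => (0:ℝ)) 0 t := hasDerivAt_const t 0
    rw [hzero] at hsum
    exact hsum.unique h0
  rw [Finset.sum_add_distrib] at hkey
  simp only [totalVar, lagD, hcomm t, sub_mul, Finset.sum_sub_distrib, neg_sub]
  linarith [hkey]
end

section
/- Assume the commutation rule ξ(t) = η'(t) holds for all t ∈ ℝ and the total variation vanishes, δᵥg(t) = 0 for all t ∈ ℝ. Then for every t ∈ ℝ, (d/dt)[δ꜀g](t) = Σ_{i=1}^{n} 𝒟ᵢg(t)·η_i(t) (the vakonomic variation identity). -/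
open BigOperators

variable {n : ℕ}

/-- Vakonomic variation: if the commutation rule `ξ = η'` holds and the total variation
vanishes identically, then `(d/dt)[δ꜀g](t) = Σ_i 𝒟ᵢg(t) · η_i(t)`. -/
theorem vakonomic_variation
    (g : (Fin n → ℝ) × (Fin n → ℝ) × ℝ → ℝ) (hg : ContDiff ℝ 2 g)
    (q : ℝ → Fin n → ℝ) (hq : ContDiff ℝ 2 q)
    (η ξ : ℝ → Fin n → ℝ) (hη : Differentiable ℝ η) (hξ : Differentiable ℝ ξ)
    (hcomm : ∀ t : ℝ, ξ t = deriv η t)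
    (htot : ∀ t : ℝ, totalVar g q η ξ t = 0)
    (t : ℝ) :
    deriv (chetaevVar g q η) t = ∑ i, lagD g q i t * η t i := by
  have hq1 : Differentiable ℝ q := hq.differentiable (by norm_num)
  have hdq : ContDiff ℝ 1 (deriv q) := by
    have := (contDiff_succ_iff_deriv.mp (show ContDiff ℝ ((1 : WithTop ℕ∞) + 1) q by
      norm_num; exact_mod_cast hq)).2.2
    exact this
  have hc : Differentiable ℝ (fun s : ℝ => ((q s, deriv q s, s) : (Fin n → ℝ) × (Fin n → ℝ) × ℝ)) :=
    hq1.prodMk ((hdq.differentiable one_ne_zero).prodMk differentiable_id)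
  have hpdv : ∀ i, ContDiff ℝ 1 (pdv g i) := fun i =>
    (hg.fderiv_right (by norm_num)).clm_apply contDiff_const
  have hpdvC : ∀ i, Differentiable ℝ (fun s => pdv g i (q s, deriv q s, s)) := fun i =>
    ((hpdv i).differentiable one_ne_zero).comp hc
  have hηi : ∀ i, Differentiable ℝ (fun s => η s i) := fun i =>
    (ContinuousLinearMap.proj (R := ℝ) (φ := fun _ : Fin n => ℝ) i).differentiable.comp hη
  have hderivηi : ∀ i, deriv (fun s => η s i) t = deriv η t i := fun i => by
    have := ((ContinuousLinearMap.proj (R := ℝ) (φ := fun _ : Fin n => ℝ) i).hasFDerivAt.comp_hasDerivAt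
      t (hη t).hasDerivAt).deriv
    simpa [Function.comp_def] using this
  have hterm : ∀ i, DifferentiableAt ℝ (fun s => pdv g i (q s, deriv q s, s) * η s i) t :=
    fun i => ((hpdvC i) t).mul ((hηi i) t)
  have hstep : deriv (chetaevVar g q η) t
      = ∑ i, (deriv (fun s => pdv g i (q s, deriv q s, s)) t * η t i
              + pdv g i (q t, deriv q t, t) * deriv (fun s => η s i) t) := by
    rw [show chetaevVar g q η = fun s => ∑ i, pdv g i (q s, deriv q s, s) * η s i from rfl]
    rw [deriv_fun_sum (fun i _ => hterm i)]
    refine Finset.sum_congr rfl fun i _ => ?_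
    exact deriv_mul ((hpdvC i) t) ((hηi i) t)
  have htot' := htot t
  unfold totalVar at htot'
  rw [hstep]
  unfold lagD
  simp only [sub_mul, Finset.sum_add_distrib, Finset.sum_sub_distrib]
  have : ∑ i, pdv g i (q t, deriv q t, t) * deriv (fun s => η s i) t
      = - ∑ i, pdx g i (q t, deriv q t, t) * η t i := by
    have h2 : ∑ i, pdv g i (q t, deriv q t, t) * deriv (fun s => η s i) t
        = ∑ i, pdv g i (q t, deriv q t, t) * ξ t i := by
      refine Finset.sum_congr rfl fun i _ => ?_
      rw [hderivηi i, hcomm t]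
    rw [h2]; linarith
  rw [this]; ring
end

section
/- Assume the Chetaev condition δ꜀g(t) = 0 holds for all t ∈ ℝ, the total variation vanishes, δᵥg(t) = 0 for all t ∈ ℝ, and the commutation rule ξ(t) = η'(t) holds for all t ∈ ℝ. Then Σ_{i=1}^{n} 𝒟ᵢg(t)·η_i(t) = 0 for every t ∈ ℝ; that is, the vanishing of the sum of the Lagrangian derivatives weighted by the virtual displacement is a necessary condition for the commutation rule under the simultaneous Chetaev and total-variation conditions. -/
open BigOperators

variable {n : ℕ}

/-- If the Chetaev condition `δ꜀g = 0`, the total-variation condition `δᵥg = 0` and the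
commutation rule `ξ = η'` hold simultaneously, then `Σ_i 𝒟ᵢg(t) · η_i(t) = 0` for all `t`:
this vanishing is a necessary condition for commutation under the two conditions. -/
theorem suslov_necessary_condition
    (g : (Fin n → ℝ) × (Fin n → ℝ) × ℝ → ℝ) (hg : ContDiff ℝ 2 g)
    (q : ℝ → Fin n → ℝ) (hq : ContDiff ℝ 2 q)
    (η ξ : ℝ → Fin n → ℝ) (hη : Differentiable ℝ η) (hξ : Differentiable ℝ ξ)
    (hchet : ∀ t : ℝ, chetaevVar g q η t = 0)
    (htot : ∀ t : ℝ, totalVar g q η ξ t = 0)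
    (hcomm : ∀ t : ℝ, ξ t = deriv η t)
    (t : ℝ) :
    ∑ i, lagD g q i t * η t i = 0 := by

  -- differentiability of the base point map
  have hq2 : ContDiff ℝ ((1:ℕ)+1) q := by exact_mod_cast hq
  have hg2 : ContDiff ℝ ((1:ℕ)+1) g := by exact_mod_cast hg
  have hq' : ContDiff ℝ 1 (deriv q) := (contDiff_succ_iff_deriv.mp hq2).2.2
  have hP : Differentiable ℝ (fun s : ℝ => (q s, deriv q s, s)) :=
    (hq.differentiable (by norm_num)).prodMk
      ((hq'.differentiable one_ne_zero).prodMk differentiable_id)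
  have hgf : ContDiff ℝ 1 (fderiv ℝ g) := (contDiff_succ_iff_fderiv.mp hg2).2.2
  have hpdv : ∀ i : Fin n, Differentiable ℝ (fun s => pdv g i (q s, deriv q s, s)) := by
    intro i
    exact ((ContinuousLinearMap.apply ℝ ℝ
      ((0, Pi.single i 1, 0) : (Fin n → ℝ) × (Fin n → ℝ) × ℝ)).differentiable.comp
      (hgf.differentiable one_ne_zero)).comp hP
  have hηi : ∀ i : Fin n, HasDerivAt (fun s => η s i) (deriv η t i) t := fun i =>
    hasDerivAt_pi.mp (hη t).hasDerivAt i
  have hsum : HasDerivAt (fun s => ∑ i, pdv g i (q s, deriv q s, s) * η s i)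
      (∑ i, (deriv (fun s => pdv g i (q s, deriv q s, s)) t * η t i
        + pdv g i (q t, deriv q t, t) * deriv η t i)) t :=
    HasDerivAt.fun_sum fun i _ => ((hpdv i t).hasDerivAt.mul (hηi i))
  have hzero : (fun s => ∑ i, pdv g i (q s, deriv q s, s) * η s i) = fun _ => (0:ℝ) := by
    funext s; exact hchet s
  rw [hzero] at hsum
  have key : ∑ i, (deriv (fun s => pdv g i (q s, deriv q s, s)) t * η t i
      + pdv g i (q t, deriv q t, t) * deriv η t i) = 0 :=
    hsum.unique (hasDerivAt_const t 0)
  rw [Finset.sum_add_distrib] at key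
  have htot' := htot t
  unfold totalVar at htot'
  rw [hcomm t] at htot'
  simp only [lagD, sub_mul, Finset.sum_sub_distrib]
  linarith
end

section
/- For every C¹ curve q : ℝ → (Fin n → ℝ), every index i ∈ {1,…,n} and every t ∈ ℝ, the Lagrangian derivative 𝒟ᵢg(t) = (d/dt)[(∂g/∂v_i)(q(t), q'(t), t)] − (∂g/∂x_i)(q(t), q'(t), t) equals 0; that is, the Lagrangian derivative of an exact (integrable) constraint g = df/dt vanishes identically. -/
open BigOperators

variable {n : ℕ}

/-- Partial derivative of `f(x, t)` with respect to `x_j`. -/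
noncomputable def pdfx (f : (Fin n → ℝ) × ℝ → ℝ) (j : Fin n) (p : (Fin n → ℝ) × ℝ) : ℝ :=
  fderiv ℝ f p (Pi.single j 1, 0)

/-- Partial derivative of `f(x, t)` with respect to `t`. -/
noncomputable def pdft (f : (Fin n → ℝ) × ℝ → ℝ) (p : (Fin n → ℝ) × ℝ) : ℝ :=
  fderiv ℝ f p (0, 1)

/-- The Lagrangian derivative of an exact (integrable) constraint
`g(x, v, t) = Σ_j (∂f/∂x_j)(x,t) v_j + (∂f/∂t)(x,t)` vanishes identically along any
C¹ curve. -/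
theorem lagrangian_derivative_of_exact_constraint_vanishes
    (f : (Fin n → ℝ) × ℝ → ℝ) (hf : ContDiff ℝ 2 f)
    (g : (Fin n → ℝ) × (Fin n → ℝ) × ℝ → ℝ)
    (hg : ∀ (x v : Fin n → ℝ) (t : ℝ),
      g (x, v, t) = ∑ j, pdfx f j (x, t) * v j + pdft f (x, t))
    (q : ℝ → Fin n → ℝ) (hq : ContDiff ℝ 1 q)
    (i : Fin n) (t : ℝ) :
    lagD g q i t = 0 := by
  set D : ((Fin n → ℝ) × ℝ) → ((Fin n → ℝ) × ℝ) →L[ℝ] ℝ := fderiv ℝ f with hDdef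
  have hfdiff : ∀ y, HasFDerivAt f (D y) y := fun y =>
    (hf.differentiable (by norm_num) y).hasFDerivAt
  have hD1 : ContDiff ℝ 1 D := hf.fderiv_right (by norm_num)
  have hDdiff : Differentiable ℝ D := hD1.differentiable one_ne_zero
  -- g as evaluation of the total derivative of f
  have hgeq : g = fun p : (Fin n → ℝ) × (Fin n → ℝ) × ℝ => D (p.1, p.2.2) (p.2.1, 1) := by
    funext p
    obtain ⟨x, v, s⟩ := p
    rw [hg]
    have hv : (v, (1:ℝ)) = (∑ j, v j • ((Pi.single j 1 : Fin n → ℝ), (0:ℝ))) + (0, 1) := by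
      ext k
      · simp [Prod.fst_sum, Finset.sum_apply, Pi.single_apply, Finset.sum_ite_eq', mul_comm]
      · simp [Prod.snd_sum]
    have hval : D (x, s) (v, 1) = ∑ j, v j * D (x, s) (Pi.single j 1, 0) + D (x, s) (0, 1) := by
      conv_lhs => rw [hv]
      rw [map_add, map_sum]
      congr 1
      refine Finset.sum_congr rfl fun j _ => ?_
      rw [map_smul, smul_eq_mul]
    simp only [pdfx, pdft, ← hDdef, hval]
    congr 1
    exact Finset.sum_congr rfl fun j _ => mul_comm _ _
  -- derivative structure of g
  set σL : ((Fin n → ℝ) × (Fin n → ℝ) × ℝ) →L[ℝ] ((Fin n → ℝ) × ℝ) :=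
    (ContinuousLinearMap.fst ℝ (Fin n → ℝ) ((Fin n → ℝ) × ℝ)).prod
      ((ContinuousLinearMap.snd ℝ (Fin n → ℝ) ℝ).comp
        (ContinuousLinearMap.snd ℝ (Fin n → ℝ) ((Fin n → ℝ) × ℝ))) with hσL
  set ψL : ((Fin n → ℝ) × (Fin n → ℝ) × ℝ) →L[ℝ] ((Fin n → ℝ) × ℝ) :=
    ((ContinuousLinearMap.fst ℝ (Fin n → ℝ) ℝ).comp
        (ContinuousLinearMap.snd ℝ (Fin n → ℝ) ((Fin n → ℝ) × ℝ))).prod 0 with hψL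
  have hσ : ∀ p : (Fin n → ℝ) × (Fin n → ℝ) × ℝ,
      HasFDerivAt (fun p : (Fin n → ℝ) × (Fin n → ℝ) × ℝ => ((p.1, p.2.2) : (Fin n → ℝ) × ℝ))
        σL p := fun p => σL.hasFDerivAt
  have hψ : ∀ p : (Fin n → ℝ) × (Fin n → ℝ) × ℝ,
      HasFDerivAt (fun p : (Fin n → ℝ) × (Fin n → ℝ) × ℝ => ((p.2.1, 1) : (Fin n → ℝ) × ℝ))
        ψL p := by
    intro p
    have : (fun p : (Fin n → ℝ) × (Fin n → ℝ) × ℝ => ((p.2.1, 1) : (Fin n → ℝ) × ℝ)) =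
        fun p => ψL p + ((0 : Fin n → ℝ), (1:ℝ)) := by
      funext p; ext k <;> simp [hψL]
    rw [this]
    exact ψL.hasFDerivAt.add_const _
  have hgD : ∀ p : (Fin n → ℝ) × (Fin n → ℝ) × ℝ,
      HasFDerivAt g
        ((D (p.1, p.2.2)).comp ψL + ((fderiv ℝ D (p.1, p.2.2)).comp σL).flip (p.2.1, 1)) p := by
    intro p
    rw [hgeq]
    have hφ : HasFDerivAt (fun p : (Fin n → ℝ) × (Fin n → ℝ) × ℝ => D (p.1, p.2.2))
        ((fderiv ℝ D (p.1, p.2.2)).comp σL) p :=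
      (hDdiff (p.1, p.2.2)).hasFDerivAt.comp p (hσ p)
    exact hφ.clm_apply (hψ p)
  -- pdv g i p = pdfx f i (x, t)
  have hpdv : ∀ p : (Fin n → ℝ) × (Fin n → ℝ) × ℝ,
      pdv g i p = D (p.1, p.2.2) (Pi.single i 1, 0) := by
    intro p
    rw [pdv, (hgD p).fderiv]
    simp [hσL, hψL, Prod.mk_zero_zero]
  have hpdx : ∀ p : (Fin n → ℝ) × (Fin n → ℝ) × ℝ,
      pdx g i p = (fderiv ℝ D (p.1, p.2.2)) (Pi.single i 1, 0) (p.2.1, 1) := by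
    intro p
    rw [pdx, (hgD p).fderiv]
    simp [hσL, hψL, Prod.mk_zero_zero]
  -- the curve r s = (q s, s)
  have hqd : ∀ s, HasDerivAt q (deriv q s) s := fun s =>
    ((hq.differentiable one_ne_zero) s).hasDerivAt
  have hr : ∀ s : ℝ, HasDerivAt (fun s : ℝ => ((q s, s) : (Fin n → ℝ) × ℝ))
      ((deriv q s, 1) : (Fin n → ℝ) × ℝ) s := fun s =>
    (hqd s).prodMk (hasDerivAt_id s)
  -- derivative of s ↦ pdv g i (q s, deriv q s, s)
  have hk : HasDerivAt (fun s => pdv g i (q s, deriv q s, s))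
      ((fderiv ℝ D (q t, t)) (deriv q t, 1) (Pi.single i 1, 0)) t := by
    have h1 : (fun s => pdv g i (q s, deriv q s, s)) =
        fun s => D (q s, s) (Pi.single i 1, 0) := by
      funext s; exact hpdv _
    rw [h1]
    have houter : HasFDerivAt (fun y : (Fin n → ℝ) × ℝ => D y (Pi.single i 1, 0))
        (((fderiv ℝ D (q t, t)).flip) (Pi.single i 1, 0)) (q t, t) := by
      have := ((hDdiff (q t, t)).hasFDerivAt).clm_apply
        (hasFDerivAt_const ((Pi.single i 1, 0) : (Fin n → ℝ) × ℝ) ((q t, t) : (Fin n → ℝ) × ℝ))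
      simpa using this
    have hk' : HasDerivAt (fun s => D (q s, s) (Pi.single i 1, 0))
        ((((fderiv ℝ D (q t, t)).flip) ((Pi.single i 1, 0) : (Fin n → ℝ) × ℝ))
          ((deriv q t, 1) : (Fin n → ℝ) × ℝ)) t :=
      HasFDerivAt.comp_hasDerivAt (f := fun s => ((q s, s) : (Fin n → ℝ) × ℝ)) t houter (hr t)
    simpa using hk'
  have hsymm : (fderiv ℝ D (q t, t)) (deriv q t, 1) (Pi.single i 1, 0) =
      (fderiv ℝ D (q t, t)) (Pi.single i 1, 0) (deriv q t, 1) :=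
    second_derivative_symmetric hfdiff (hDdiff (q t, t)).hasFDerivAt _ _
  rw [lagD, hk.deriv, hpdx, hsymm]
  ring
end

section
/- Let q : ℝ → (Fin n → ℝ) be a C² curve along which the constraint is satisfied, i.e. g(q(t), q'(t), t) = 0 for all t ∈ ℝ. Then for every index i ∈ {1,…,n} and every t ∈ ℝ, φ(q(t), t)·𝒟ᵢg(t) = − (d/dt)[φ(q(t), t)]·(∂g/∂v_i)(q(t), q'(t), t), where 𝒟ᵢg(t) = (d/dt)[(∂g/∂v_i)(q(t), q'(t), t)] − (∂g/∂x_i)(q(t), q'(t), t) is the Lagrangian derivative. -/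
open BigOperators

variable {n : ℕ}

/-- projection (x,v,t) ↦ (x,t) as a CLM -/
noncomputable def projP (n : ℕ) : ((Fin n → ℝ) × (Fin n → ℝ) × ℝ) →L[ℝ] ((Fin n → ℝ) × ℝ) :=
  (ContinuousLinearMap.fst ℝ (Fin n → ℝ) ((Fin n → ℝ) × ℝ)).prod
    ((ContinuousLinearMap.snd ℝ (Fin n → ℝ) ℝ).comp
      (ContinuousLinearMap.snd ℝ (Fin n → ℝ) ((Fin n → ℝ) × ℝ)))

@[simp] lemma projP_apply (p : (Fin n → ℝ) × (Fin n → ℝ) × ℝ) : projP n p = (p.1, p.2.2) := rfl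

/-- extraction (x,v,t) ↦ v j as a CLM -/
noncomputable def evj (n : ℕ) (j : Fin n) : ((Fin n → ℝ) × (Fin n → ℝ) × ℝ) →L[ℝ] ℝ :=
  (ContinuousLinearMap.proj j).comp
    ((ContinuousLinearMap.fst ℝ (Fin n → ℝ) ℝ).comp
      (ContinuousLinearMap.snd ℝ (Fin n → ℝ) ((Fin n → ℝ) × ℝ)))

@[simp] lemma evj_apply (j : Fin n) (p : (Fin n → ℝ) × (Fin n → ℝ) × ℝ) : evj n j p = p.2.1 j := rfl

lemma aux_fderiv
    (f : (Fin n → ℝ) × ℝ → ℝ) (hf : ContDiff ℝ 2 f)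
    (φ : (Fin n → ℝ) × ℝ → ℝ) (hφ : ContDiff ℝ 1 φ)
    (g : (Fin n → ℝ) × (Fin n → ℝ) × ℝ → ℝ) (hg : ContDiff ℝ 2 g)
    (hfac : ∀ (x v : Fin n → ℝ) (t : ℝ),
      φ (x, t) * g (x, v, t) = ∑ j, pdfx f j (x, t) * v j + pdft f (x, t))
    (p w : (Fin n → ℝ) × (Fin n → ℝ) × ℝ) :
    φ (p.1, p.2.2) * fderiv ℝ g p w + g p * fderiv ℝ φ (p.1, p.2.2) (w.1, w.2.2)
      = ∑ j, (pdfx f j (p.1, p.2.2) * w.2.1 j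
          + p.2.1 j * fderiv ℝ (pdfx f j) (p.1, p.2.2) (w.1, w.2.2))
        + fderiv ℝ (pdft f) (p.1, p.2.2) (w.1, w.2.2) := by
  have hφd : Differentiable ℝ φ := hφ.differentiable one_ne_zero
  have hgd : Differentiable ℝ g := hg.differentiable (by norm_num)
  have hAc : ∀ j : Fin n, ContDiff ℝ 1 (pdfx f j) := fun j =>
    (hf.fderiv_right (by norm_num)).clm_apply contDiff_const
  have hBc : ContDiff ℝ 1 (pdft f) :=
    (hf.fderiv_right (by norm_num)).clm_apply contDiff_const
  -- derivative of LHS function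
  have hG : HasFDerivAt (fun p : (Fin n → ℝ) × (Fin n → ℝ) × ℝ => φ (p.1, p.2.2) * g p)
      (φ (p.1, p.2.2) • fderiv ℝ g p
        + g p • ((fderiv ℝ φ (p.1, p.2.2)).comp (projP n))) p := by
    have h1 : HasFDerivAt (fun p : (Fin n → ℝ) × (Fin n → ℝ) × ℝ => φ (p.1, p.2.2))
        ((fderiv ℝ φ (p.1, p.2.2)).comp (projP n)) p := by
      have := ((hφd (p.1, p.2.2)).hasFDerivAt).comp p (projP n).hasFDerivAt
      exact this
    exact h1.mul (hgd p).hasFDerivAt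
  have hF : HasFDerivAt (fun p : (Fin n → ℝ) × (Fin n → ℝ) × ℝ =>
      ∑ j, pdfx f j (p.1, p.2.2) * p.2.1 j + pdft f (p.1, p.2.2))
      ((∑ j, (pdfx f j (p.1, p.2.2) • (evj n j)
          + p.2.1 j • ((fderiv ℝ (pdfx f j) (p.1, p.2.2)).comp (projP n))))
        + (fderiv ℝ (pdft f) (p.1, p.2.2)).comp (projP n)) p := by
    have hsum : HasFDerivAt (fun p : (Fin n → ℝ) × (Fin n → ℝ) × ℝ =>
        ∑ j, pdfx f j (p.1, p.2.2) * p.2.1 j)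
        (∑ j, (pdfx f j (p.1, p.2.2) • (evj n j)
          + p.2.1 j • ((fderiv ℝ (pdfx f j) (p.1, p.2.2)).comp (projP n)))) p := by
      apply HasFDerivAt.fun_sum
      intro j _
      have hc : HasFDerivAt (fun p : (Fin n → ℝ) × (Fin n → ℝ) × ℝ => pdfx f j (p.1, p.2.2))
          ((fderiv ℝ (pdfx f j) (p.1, p.2.2)).comp (projP n)) p := by
        have := (((hAc j).differentiable one_ne_zero (p.1, p.2.2)).hasFDerivAt).comp p
          (projP n).hasFDerivAt
        exact this
      exact hc.mul (evj n j).hasFDerivAt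
    have hB : HasFDerivAt (fun p : (Fin n → ℝ) × (Fin n → ℝ) × ℝ => pdft f (p.1, p.2.2))
        ((fderiv ℝ (pdft f) (p.1, p.2.2)).comp (projP n)) p := by
      have := ((hBc.differentiable one_ne_zero (p.1, p.2.2)).hasFDerivAt).comp p
        (projP n).hasFDerivAt
      exact this
    exact hsum.add hB
  have heq : (fun p : (Fin n → ℝ) × (Fin n → ℝ) × ℝ => φ (p.1, p.2.2) * g p)
      = (fun p : (Fin n → ℝ) × (Fin n → ℝ) × ℝ =>
        ∑ j, pdfx f j (p.1, p.2.2) * p.2.1 j + pdft f (p.1, p.2.2)) := by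
    funext p
    exact hfac p.1 p.2.1 p.2.2
  rw [heq] at hG
  have hDeq := hG.unique hF
  have happ := DFunLike.congr_fun hDeq w
  simpa [mul_comm] using happ

lemma aux_pdv
    (f : (Fin n → ℝ) × ℝ → ℝ) (hf : ContDiff ℝ 2 f)
    (φ : (Fin n → ℝ) × ℝ → ℝ) (hφ : ContDiff ℝ 1 φ)
    (g : (Fin n → ℝ) × (Fin n → ℝ) × ℝ → ℝ) (hg : ContDiff ℝ 2 g)
    (hfac : ∀ (x v : Fin n → ℝ) (t : ℝ),
      φ (x, t) * g (x, v, t) = ∑ j, pdfx f j (x, t) * v j + pdft f (x, t))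
    (x v : Fin n → ℝ) (t : ℝ) (i : Fin n) :
    φ (x, t) * pdv g i (x, v, t) = pdfx f i (x, t) := by
  have h := aux_fderiv f hf φ hφ g hg hfac (x, v, t) (0, Pi.single i 1, 0)
  have h0 : ((0 : Fin n → ℝ), (0 : ℝ)) = (0 : (Fin n → ℝ) × ℝ) := rfl
  simp only [h0, map_zero, mul_zero, zero_mul, add_zero] at h
  simpa [pdv, Pi.single_apply, mul_ite, Finset.sum_ite_eq'] using h

lemma aux_pdx
    (f : (Fin n → ℝ) × ℝ → ℝ) (hf : ContDiff ℝ 2 f)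
    (φ : (Fin n → ℝ) × ℝ → ℝ) (hφ : ContDiff ℝ 1 φ)
    (g : (Fin n → ℝ) × (Fin n → ℝ) × ℝ → ℝ) (hg : ContDiff ℝ 2 g)
    (hfac : ∀ (x v : Fin n → ℝ) (t : ℝ),
      φ (x, t) * g (x, v, t) = ∑ j, pdfx f j (x, t) * v j + pdft f (x, t))
    (x v : Fin n → ℝ) (t : ℝ) (i : Fin n) :
    φ (x, t) * pdx g i (x, v, t) + g (x, v, t) * fderiv ℝ φ (x, t) (Pi.single i 1, 0)
      = ∑ j, v j * fderiv ℝ (pdfx f j) (x, t) (Pi.single i 1, 0)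
        + fderiv ℝ (pdft f) (x, t) (Pi.single i 1, 0) := by
  have h := aux_fderiv f hf φ hφ g hg hfac (x, v, t) (Pi.single i 1, 0, 0)
  simpa [pdx] using h

lemma fderiv_pdfx_eq (f : (Fin n → ℝ) × ℝ → ℝ) (hf : ContDiff ℝ 2 f) (j : Fin n)
    (y u : (Fin n → ℝ) × ℝ) :
    fderiv ℝ (pdfx f j) y u = fderiv ℝ (fderiv ℝ f) y u (Pi.single j 1, 0) := by
  have hd : DifferentiableAt ℝ (fderiv ℝ f) y :=
    ((hf.fderiv_right (m := 1) (by norm_num)).differentiable one_ne_zero) y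
  have : fderiv ℝ (fun z => fderiv ℝ f z (Pi.single j 1, (0:ℝ))) y
      = (fderiv ℝ f y).comp (fderiv ℝ (fun _ => (Pi.single j 1, (0:ℝ))) y)
        + (fderiv ℝ (fderiv ℝ f) y).flip (Pi.single j 1, (0:ℝ)) :=
    fderiv_clm_apply hd (differentiableAt_const _)
  simp only [fderiv_fun_const, Pi.zero_apply, ContinuousLinearMap.comp_zero, zero_add] at this
  have h2 := DFunLike.congr_fun this u
  simp at h2; exact h2

lemma fderiv_pdft_eq (f : (Fin n → ℝ) × ℝ → ℝ) (hf : ContDiff ℝ 2 f)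
    (y u : (Fin n → ℝ) × ℝ) :
    fderiv ℝ (pdft f) y u = fderiv ℝ (fderiv ℝ f) y u (0, 1) := by
  have hd : DifferentiableAt ℝ (fderiv ℝ f) y :=
    ((hf.fderiv_right (m := 1) (by norm_num)).differentiable one_ne_zero) y
  have : fderiv ℝ (fun z => fderiv ℝ f z ((0 : Fin n → ℝ), (1:ℝ))) y
      = (fderiv ℝ f y).comp (fderiv ℝ (fun _ => ((0 : Fin n → ℝ), (1:ℝ))) y)
        + (fderiv ℝ (fderiv ℝ f) y).flip ((0 : Fin n → ℝ), (1:ℝ)) :=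
    fderiv_clm_apply hd (differentiableAt_const _)
  simp only [fderiv_fun_const, Pi.zero_apply, ContinuousLinearMap.comp_zero, zero_add] at this
  have h2 := DFunLike.congr_fun this u
  simp at h2; exact h2

lemma aux_symm (f : (Fin n → ℝ) × ℝ → ℝ) (hf : ContDiff ℝ 2 f)
    (y u w : (Fin n → ℝ) × ℝ) :
    fderiv ℝ (fderiv ℝ f) y u w = fderiv ℝ (fderiv ℝ f) y w u := by
  apply second_derivative_symmetric (f := f) (f' := fderiv ℝ f)
  · exact fun z => ((hf.differentiable (by norm_num)) z).hasFDerivAt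
  · exact (((hf.fderiv_right (m := 1) (by norm_num)).differentiable one_ne_zero) y).hasFDerivAt

lemma aux_sum_eq (f : (Fin n → ℝ) × ℝ → ℝ) (hf : ContDiff ℝ 2 f)
    (y : (Fin n → ℝ) × ℝ) (v : Fin n → ℝ) (i : Fin n) :
    ∑ j, v j * fderiv ℝ (pdfx f j) y (Pi.single i 1, 0)
      + fderiv ℝ (pdft f) y (Pi.single i 1, 0)
      = fderiv ℝ (pdfx f i) y (v, 1) := by
  have h1 : ∀ j, fderiv ℝ (pdfx f j) y (Pi.single i 1, 0)
      = fderiv ℝ (pdfx f i) y (Pi.single j 1, 0) := by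
    intro j
    rw [fderiv_pdfx_eq f hf, fderiv_pdfx_eq f hf,
      aux_symm f hf y (Pi.single i 1, 0) (Pi.single j 1, 0)]
  have h2 : fderiv ℝ (pdft f) y (Pi.single i 1, 0)
      = fderiv ℝ (pdfx f i) y (0, 1) := by
    rw [fderiv_pdft_eq f hf, fderiv_pdfx_eq f hf,
      aux_symm f hf y (Pi.single i 1, 0) (0, 1)]
  simp only [h1, h2]
  have hv : ((v, (1:ℝ)) : (Fin n → ℝ) × ℝ)
      = (∑ j, v j • ((Pi.single j 1, 0) : (Fin n → ℝ) × ℝ)) + (0, 1) := by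
    ext k
    · simp [Prod.fst_sum, Finset.sum_apply, Pi.single_apply, mul_ite, Finset.sum_ite_eq']
    · simp [Prod.snd_sum]
  rw [hv, map_add, map_sum]
  congr 1
  apply Finset.sum_congr rfl
  intro j _
  rw [map_smul, smul_eq_mul]

/-- For a constraint `g` admitting an integrating factor `φ`
(`φ·g = Σ_j (∂f/∂x_j) v_j + ∂f/∂t`), along any C² motion satisfying the constraint one
has `φ(q(t),t) · 𝒟ᵢg(t) = − (d/dt)[φ(q(t),t)] · (∂g/∂v_i)(q(t), q'(t), t)`. -/
theorem integrating_factor_lagrangian_derivative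
    (f : (Fin n → ℝ) × ℝ → ℝ) (hf : ContDiff ℝ 2 f)
    (φ : (Fin n → ℝ) × ℝ → ℝ) (hφ : ContDiff ℝ 1 φ)
    (g : (Fin n → ℝ) × (Fin n → ℝ) × ℝ → ℝ) (hg : ContDiff ℝ 2 g)
    (hfac : ∀ (x v : Fin n → ℝ) (t : ℝ),
      φ (x, t) * g (x, v, t) = ∑ j, pdfx f j (x, t) * v j + pdft f (x, t))
    (q : ℝ → Fin n → ℝ) (hq : ContDiff ℝ 2 q)
    (hmotion : ∀ t : ℝ, g (q t, deriv q t, t) = 0)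
    (i : Fin n) (t : ℝ) :
    φ (q t, t) * lagD g q i t
      = - deriv (fun s => φ (q s, s)) t * pdv g i (q t, deriv q t, t) := by
  have hqd1 : Differentiable ℝ q := hq.differentiable (by norm_num)
  have hAi : ContDiff ℝ 1 (pdfx f i) := (hf.fderiv_right (by norm_num)).clm_apply contDiff_const
  have hdq : ContDiff ℝ 1 (deriv q) := by
    have h1 : ContDiff ℝ 1 (fun s => fderiv ℝ q s 1) :=
      (hq.fderiv_right (by norm_num)).clm_apply contDiff_const
    have h2 : (fun s => fderiv ℝ q s 1) = deriv q := funext fun s => fderiv_apply_one_eq_deriv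
    rwa [h2] at h1
  have hpdv : ContDiff ℝ 1 (pdv g i) := (hg.fderiv_right (by norm_num)).clm_apply contDiff_const
  have hγ : Differentiable ℝ (fun s => ((q s, deriv q s, s) : (Fin n → ℝ) × (Fin n → ℝ) × ℝ)) :=
    hqd1.prodMk ((hdq.differentiable one_ne_zero).prodMk differentiable_id)
  have hφcomp : DifferentiableAt ℝ (fun s => φ (q s, s)) t :=
    ((hφ.differentiable one_ne_zero).comp (hqd1.prodMk differentiable_id)) t
  have hpdvcomp : DifferentiableAt ℝ (fun s => pdv g i (q s, deriv q s, s)) t :=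
    ((hpdv.differentiable one_ne_zero).comp hγ) t
  -- Step 1: derivative of s ↦ pdfx f i (q s, s)
  have hcurve : HasDerivAt (fun s : ℝ => ((q s, s) : (Fin n → ℝ) × ℝ)) (deriv q t, 1) t :=
    ((hqd1 t).hasDerivAt).prodMk (hasDerivAt_id t)
  have step1 : deriv (fun s => pdfx f i (q s, s)) t
      = fderiv ℝ (pdfx f i) (q t, t) (deriv q t, 1) := by
    have hhd := HasFDerivAt.comp_hasDerivAt (x := t)
      (f := fun s : ℝ => ((q s, s) : (Fin n → ℝ) × ℝ))
      (((hAi.differentiable one_ne_zero) (q t, t)).hasFDerivAt) hcurve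
    exact hhd.deriv
  -- Step 2: along the motion
  have step2 : φ (q t, t) * pdx g i (q t, deriv q t, t)
      = fderiv ℝ (pdfx f i) (q t, t) (deriv q t, 1) := by
    have h := aux_pdx f hf φ hφ g hg hfac (q t) (deriv q t) t i
    rw [hmotion t, zero_mul, add_zero] at h
    rw [h, aux_sum_eq f hf (q t, t) (deriv q t) i]
  -- Step 3: product rule
  have hL1 : (fun s => pdfx f i (q s, s))
      = fun s => φ (q s, s) * pdv g i (q s, deriv q s, s) :=
    funext fun s => (aux_pdv f hf φ hφ g hg hfac (q s) (deriv q s) s i).symm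
  have step3 : deriv (fun s => pdfx f i (q s, s)) t
      = deriv (fun s => φ (q s, s)) t * pdv g i (q t, deriv q t, t)
        + φ (q t, t) * deriv (fun s => pdv g i (q s, deriv q s, s)) t := by
    rw [hL1]
    exact deriv_mul hφcomp hpdvcomp
  have key : φ (q t, t) * pdx g i (q t, deriv q t, t)
      = deriv (fun s => φ (q s, s)) t * pdv g i (q t, deriv q t, t)
        + φ (q t, t) * deriv (fun s => pdv g i (q s, deriv q s, s)) t := by
    rw [← step3, step1, step2]
  rw [lagD, mul_sub, neg_mul]
  linarith [key]
end

section
/- Let q : ℝ → (Fin n → ℝ) be a C² curve along which the constraint is satisfied, i.e. g(q(t), q'(t), t) = 0 for all t ∈ ℝ. Fix t ∈ ℝ with φ(q(t), t) ≠ 0, and let η ∈ (Fin n → ℝ) be a virtual displacement satisfying the Chetaev condition Σ_{i=1}^{n} (∂g/∂v_i)(q(t), q'(t), t)·η_i = 0. Then Σ_{i=1}^{n} 𝒟ᵢg(t)·η_i = 0, where 𝒟ᵢg(t) = (d/dt)[(∂g/∂v_i)(q(t), q'(t), t)] − (∂g/∂x_i)(q(t), q'(t), t) is the Lagrangian derivative.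 -/
open BigOperators

variable {n : ℕ}

/-- Auxiliary: differentiating the factored identity in the `v`-direction. -/
lemma auxA_pdv (f : (Fin n → ℝ) × ℝ → ℝ)
    (φ : (Fin n → ℝ) × ℝ → ℝ)
    (g : (Fin n → ℝ) × (Fin n → ℝ) × ℝ → ℝ) (hg : Differentiable ℝ g)
    (hD : ∀ (x v : Fin n → ℝ) (t : ℝ), φ (x, t) * g (x, v, t) = fderiv ℝ f (x, t) (v, 1))
    (x v : Fin n → ℝ) (t : ℝ) (i : Fin n) :
    φ (x, t) * pdv g i (x, v, t) = fderiv ℝ f (x, t) (Pi.single i 1, 0) := by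
  set e : Fin n → ℝ := Pi.single i 1 with he
  have hce : HasDerivAt (fun s : ℝ => v + s • e) e 0 := by
    simpa using ((hasDerivAt_id (0:ℝ)).smul_const e).const_add v
  have hc : HasDerivAt (fun s : ℝ => ((x, v + s • e, t) : (Fin n → ℝ) × (Fin n → ℝ) × ℝ))
      ((0, e, 0) : (Fin n → ℝ) × (Fin n → ℝ) × ℝ) 0 :=
    (hasDerivAt_const 0 x).prodMk (hce.prodMk (hasDerivAt_const 0 t))
  have h1 : HasDerivAt (fun s : ℝ => φ (x, t) * g (x, v + s • e, t))
      (φ (x, t) * fderiv ℝ g (x, v, t) (0, e, 0)) 0 := by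
    have hgc : HasDerivAt (fun s : ℝ => g (x, v + s • e, t)) (fderiv ℝ g (x, v, t) (0, e, 0)) 0 := by
      have := HasFDerivAt.comp_hasDerivAt 0 (by simpa using (hg (x, v, t)).hasFDerivAt) hc
      simpa [Function.comp_def] using this
    simpa using hgc.const_mul (φ (x, t))
  have h2 : HasDerivAt (fun s : ℝ => fderiv ℝ f (x, t) (v + s • e, 1))
      (fderiv ℝ f (x, t) (e, 0)) 0 := by
    have key : (fun s : ℝ => fderiv ℝ f (x, t) (v + s • e, 1))
        = fun s : ℝ => fderiv ℝ f (x, t) (v, 1) + s * fderiv ℝ f (x, t) (e, 0) := by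
      funext s
      have h : ((v + s • e, (1 : ℝ)) : (Fin n → ℝ) × ℝ) = (v, 1) + s • ((e, 0) : (Fin n → ℝ) × ℝ) := by
        simp [Prod.ext_iff]
      rw [h, map_add, map_smul, smul_eq_mul]
    rw [key]
    simpa using (hasDerivAt_mul_const (fderiv ℝ f (x, t) (e, 0))).const_add
      (fderiv ℝ f (x, t) (v, 1))
  have heq : (fun s : ℝ => φ (x, t) * g (x, v + s • e, t))
      = fun s : ℝ => fderiv ℝ f (x, t) (v + s • e, 1) := funext fun s => hD x (v + s • e) t
  rw [heq] at h1
  simpa [pdv] using h1.unique h2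

/-- Auxiliary: differentiating the factored identity in the `x`-direction. -/
lemma auxB_pdx (f : (Fin n → ℝ) × ℝ → ℝ) (hf : ContDiff ℝ 2 f)
    (φ : (Fin n → ℝ) × ℝ → ℝ) (hφ : Differentiable ℝ φ)
    (g : (Fin n → ℝ) × (Fin n → ℝ) × ℝ → ℝ) (hg : Differentiable ℝ g)
    (hD : ∀ (x v : Fin n → ℝ) (t : ℝ), φ (x, t) * g (x, v, t) = fderiv ℝ f (x, t) (v, 1))
    (x v : Fin n → ℝ) (t : ℝ) (i : Fin n) :
    fderiv ℝ φ (x, t) (Pi.single i 1, 0) * g (x, v, t) + φ (x, t) * pdx g i (x, v, t)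
      = fderiv ℝ (fderiv ℝ f) (x, t) (Pi.single i 1, 0) (v, 1) := by
  set e : Fin n → ℝ := Pi.single i 1 with he
  have hce : HasDerivAt (fun s : ℝ => x + s • e) e 0 := by
    simpa using ((hasDerivAt_id (0:ℝ)).smul_const e).const_add x
  have hc : HasDerivAt (fun s : ℝ => ((x + s • e, t) : (Fin n → ℝ) × ℝ))
      ((e, 0) : (Fin n → ℝ) × ℝ) 0 := hce.prodMk (hasDerivAt_const 0 t)
  have hc2 : HasDerivAt (fun s : ℝ => ((x + s • e, v, t) : (Fin n → ℝ) × (Fin n → ℝ) × ℝ))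
      ((e, 0, 0) : (Fin n → ℝ) × (Fin n → ℝ) × ℝ) 0 :=
    hce.prodMk ((hasDerivAt_const 0 v).prodMk (hasDerivAt_const 0 t))
  have hφc : HasDerivAt (fun s : ℝ => φ (x + s • e, t)) (fderiv ℝ φ (x, t) (e, 0)) 0 := by
    have := HasFDerivAt.comp_hasDerivAt 0 (by simpa using (hφ (x, t)).hasFDerivAt) hc
    simpa [Function.comp_def] using this
  have hgc : HasDerivAt (fun s : ℝ => g (x + s • e, v, t)) (fderiv ℝ g (x, v, t) (e, 0, 0)) 0 := by
    have := HasFDerivAt.comp_hasDerivAt 0 (by simpa using (hg (x, v, t)).hasFDerivAt) hc2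
    simpa [Function.comp_def] using this
  have h1 : HasDerivAt (fun s : ℝ => φ (x + s • e, t) * g (x + s • e, v, t))
      (fderiv ℝ φ (x, t) (e, 0) * g (x, v, t) + φ (x, t) * fderiv ℝ g (x, v, t) (e, 0, 0)) 0 := by
    simpa [Pi.mul_def] using hφc.mul hgc
  have hf' : Differentiable ℝ (fderiv ℝ f) :=
    (hf.fderiv_right (m := 1) (by norm_num)).differentiable one_ne_zero
  have hder : HasDerivAt (fun s : ℝ => fderiv ℝ f (x + s • e, t))
      (fderiv ℝ (fderiv ℝ f) (x, t) (e, 0)) 0 := by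
    have := HasFDerivAt.comp_hasDerivAt 0 (by simpa using (hf' (x, t)).hasFDerivAt) hc
    simpa [Function.comp_def] using this
  have h2 : HasDerivAt (fun s : ℝ => fderiv ℝ f (x + s • e, t) (v, 1))
      (fderiv ℝ (fderiv ℝ f) (x, t) (e, 0) (v, 1)) 0 := by
    simpa using hder.clm_apply (hasDerivAt_const 0 ((v, 1) : (Fin n → ℝ) × ℝ))
  have heq : (fun s : ℝ => φ (x + s • e, t) * g (x + s • e, v, t))
      = fun s : ℝ => fderiv ℝ f (x + s • e, t) (v, 1) := funext fun s => hD (x + s • e) v t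
  rw [heq] at h1
  simpa [pdx] using h1.unique h2

/-- For a constraint `g` admitting an integrating factor `φ`, along a C² motion
satisfying the constraint, at any instant where `φ ≠ 0` the sum `Σ_i 𝒟ᵢg(t) · η_i`
vanishes for every virtual displacement `η` satisfying the Chetaev condition. -/
theorem integrating_factor_chetaev_sum_vanishes
    (f : (Fin n → ℝ) × ℝ → ℝ) (hf : ContDiff ℝ 2 f)
    (φ : (Fin n → ℝ) × ℝ → ℝ) (hφ : ContDiff ℝ 1 φ)
    (g : (Fin n → ℝ) × (Fin n → ℝ) × ℝ → ℝ) (hg : ContDiff ℝ 2 g)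
    (hfac : ∀ (x v : Fin n → ℝ) (t : ℝ),
      φ (x, t) * g (x, v, t) = ∑ j, pdfx f j (x, t) * v j + pdft f (x, t))
    (q : ℝ → Fin n → ℝ) (hq : ContDiff ℝ 2 q)
    (hmotion : ∀ t : ℝ, g (q t, deriv q t, t) = 0)
    (t : ℝ) (hφ0 : φ (q t, t) ≠ 0)
    (η : Fin n → ℝ)
    (hchet : ∑ i, pdv g i (q t, deriv q t, t) * η i = 0) :
    ∑ i, lagD g q i t * η i = 0 := by
  have hgdiff : Differentiable ℝ g := hg.differentiable two_ne_zero
  have hφdiff : Differentiable ℝ φ := hφ.differentiable one_ne_zero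
  -- the identity in linear-map form
  have hD : ∀ (x v : Fin n → ℝ) (t' : ℝ),
      φ (x, t') * g (x, v, t') = fderiv ℝ f (x, t') (v, 1) := by
    intro x v t'
    rw [hfac]
    have hv0 : ((v, (0:ℝ)) : (Fin n → ℝ) × ℝ)
        = ∑ j, v j • ((Pi.single j 1 : Fin n → ℝ), (0:ℝ)) := by
      rw [Prod.ext_iff]
      constructor
      · rw [Prod.fst_sum]
        funext k
        simp [Finset.sum_apply, Pi.single_apply]
      · rw [Prod.snd_sum]
        simp
    have h1 : ((v, (1:ℝ)) : (Fin n → ℝ) × ℝ)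
        = ((v, (0:ℝ)) : (Fin n → ℝ) × ℝ) + ((0 : Fin n → ℝ), (1:ℝ)) := by simp
    rw [h1, map_add, hv0, map_sum]
    have hterm : ∀ j : Fin n, (fderiv ℝ f (x, t'))
        (v j • ((Pi.single j 1 : Fin n → ℝ), (0:ℝ))) = pdfx f j (x, t') * v j := by
      intro j
      rw [map_smul, smul_eq_mul, pdfx, mul_comm]
    rw [Finset.sum_congr rfl fun j _ => hterm j]
    rfl
  have hA := auxA_pdv f φ g hgdiff hD
  have hB := auxB_pdx f hf φ hφdiff g hgdiff hD
  have hqdiff : Differentiable ℝ q := hq.differentiable two_ne_zero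
  have hcurve : HasDerivAt (fun u : ℝ => ((q u, u) : (Fin n → ℝ) × ℝ)) (deriv q t, 1) t :=
    ((hqdiff t).hasDerivAt).prodMk (hasDerivAt_id t)
  have hBder : HasDerivAt (fun s : ℝ => φ (q s, s)) (fderiv ℝ φ (q t, t) (deriv q t, 1)) t := by
    have := HasFDerivAt.comp_hasDerivAt t (by simpa using (hφdiff (q t, t)).hasFDerivAt) hcurve
    simpa [Function.comp_def] using this
  set β := fderiv ℝ φ (q t, t) (deriv q t, 1) with hβ
  set φt := φ (q t, t) with hφt
  have hf' : Differentiable ℝ (fderiv ℝ f) :=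
    (hf.fderiv_right (m := 1) (by norm_num)).differentiable one_ne_zero
  have hsymm : ∀ u w, fderiv ℝ (fderiv ℝ f) (q t, t) u w
      = fderiv ℝ (fderiv ℝ f) (q t, t) w u :=
    second_derivative_symmetric (fun y => ((hf.differentiable two_ne_zero) y).hasFDerivAt)
      ((hf' (q t, t)).hasFDerivAt)
  have hev : ∀ᶠ s in nhds t, φ (q s, s) ≠ 0 := hBder.continuousAt.eventually_ne hφ0
  have hlag : ∀ i, lagD g q i t = -(β / φt) * pdv g i (q t, deriv q t, t) := by
    intro i
    set e : Fin n → ℝ := Pi.single i 1 with he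
    set Ai := fderiv ℝ f (q t, t) (e, 0) with hAi
    set Ki := fderiv ℝ (fderiv ℝ f) (q t, t) (deriv q t, 1) (e, 0) with hKi
    have hAder : HasDerivAt (fun s : ℝ => fderiv ℝ f (q s, s) (e, 0)) Ki t := by
      have hd : HasDerivAt (fun s : ℝ => fderiv ℝ f (q s, s))
          (fderiv ℝ (fderiv ℝ f) (q t, t) (deriv q t, 1)) t := by
        have := HasFDerivAt.comp_hasDerivAt t (by simpa using (hf' (q t, t)).hasFDerivAt) hcurve
        simpa [Function.comp_def] using this
      simpa using hd.clm_apply (hasDerivAt_const t ((e, 0) : (Fin n → ℝ) × ℝ))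
    have hpdx : φt * pdx g i (q t, deriv q t, t) = Ki := by
      have hBi := hB (q t) (deriv q t) t i
      rw [hmotion t, mul_zero, zero_add] at hBi
      rw [hBi, hKi, hsymm]
    have hevEq : (fun s : ℝ => pdv g i (q s, deriv q s, s))
        =ᶠ[nhds t] fun s : ℝ => fderiv ℝ f (q s, s) (e, 0) / φ (q s, s) := by
      filter_upwards [hev] with s hs
      have h := hA (q s) (deriv q s) s i
      field_simp
      linarith [h]
    have hdiv : HasDerivAt (fun s : ℝ => fderiv ℝ f (q s, s) (e, 0) / φ (q s, s))
        ((Ki * φt - Ai * β) / φt ^ 2) t := hAder.div hBder hφ0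
    have hderiv_eq : deriv (fun s : ℝ => pdv g i (q s, deriv q s, s)) t
        = (Ki * φt - Ai * β) / φt ^ 2 := by
      rw [hevEq.deriv_eq, hdiv.deriv]
    have hAieq : Ai = φt * pdv g i (q t, deriv q t, t) := (hA (q t) (deriv q t) t i).symm
    rw [lagD, hderiv_eq, hAieq]
    have hpdx2 : pdx g i (q t, deriv q t, t) = Ki / φt := by
      field_simp
      linarith [hpdx]
    rw [hpdx2]
    field_simp
    ring
  calc ∑ i, lagD g q i t * η i
      = ∑ i, -(β / φt) * (pdv g i (q t, deriv q t, t) * η i) := by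
        refine Finset.sum_congr rfl fun i _ => ?_
        rw [hlag i, mul_assoc]
    _ = -(β / φt) * ∑ i, pdv g i (q t, deriv q t, t) * η i := by rw [Finset.mul_sum]
    _ = 0 := by rw [hchet, mul_zero]
end

section
/- Let n ≥ 2 and let a ∈ Matrix (Fin (n−1)) (Fin n) ℝ be a matrix whose n−1 rows are linearly independent (rank n−1). Then for every skew-symmetric matrix A ∈ Matrix (Fin n) (Fin n) ℝ and all vectors v, δ ∈ (Fin n → ℝ) satisfying Σ_{j=1}^{n} a_{ν,j}·v_j = 0 for all ν ∈ {1,…,n−1} and Σ_{j=1}^{n} a_{ν,j}·δ_j = 0 for all ν ∈ {1,…,n−1}, one has Σ_{i=1}^{n} Σ_{j=1}^{n} A_{i,j}·v_j·δ_i = 0. (In the case of κ = n−1 constraints the dynamic consistency property holds regardless of the form of the constraints.) -/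
open BigOperators

lemma skew_sum_zero {n : ℕ} (A : Matrix (Fin n) (Fin n) ℝ)
    (hA : ∀ i j : Fin n, A j i = -A i j) (v : Fin n → ℝ) :
    ∑ i, ∑ j, A i j * v j * v i = 0 := by
  have h : ∑ i, ∑ j, A i j * v j * v i = ∑ i, ∑ j, -(A i j * v j * v i) := by
    conv_lhs => rw [Finset.sum_comm]
    refine Finset.sum_congr rfl fun i _ => Finset.sum_congr rfl fun j _ => ?_
    rw [hA i j]; ring
  have h2 : ∑ i, ∑ j, A i j * v j * v i = -∑ i, ∑ j, A i j * v j * v i := by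
    simp only [Finset.sum_neg_distrib] at h; exact h
  linarith

/-- With `κ = n − 1` independent linear constraints, the dynamic consistency property
holds regardless of the form of the constraints: for any skew-symmetric matrix `A` and
any vectors `v, δ` annihilated by all the constraint rows, `Σ_{i,j} A_{i,j} v_j δ_i = 0`. -/
theorem high_constraint_case
    (n : ℕ) (hn : 2 ≤ n)
    (a : Matrix (Fin (n - 1)) (Fin n) ℝ)
    (ha : LinearIndependent ℝ (fun ν : Fin (n - 1) => a ν))
    (A : Matrix (Fin n) (Fin n) ℝ)
    (hA : ∀ i j : Fin n, A j i = -A i j)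
    (v δ : Fin n → ℝ)
    (hv : ∀ ν : Fin (n - 1), ∑ j, a ν j * v j = 0)
    (hδ : ∀ ν : Fin (n - 1), ∑ j, a ν j * δ j = 0) :
    ∑ i, ∑ j, A i j * v j * δ i = 0 := by
  by_cases hv0 : v = 0
  · subst hv0; simp
  -- the kernel of the constraint map has dimension 1
  set f := a.mulVecLin with hf
  have hrank : a.rank = n - 1 := by
    rw [Matrix.rank_eq_finrank_span_row]
    have : LinearIndependent ℝ a := ha
    rw [finrank_span_eq_card (show LinearIndependent ℝ a.row from this), Fintype.card_fin]
  have hker : Module.finrank ℝ (LinearMap.ker f) = 1 := by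
    have h1 := LinearMap.finrank_range_add_finrank_ker f
    have h2 : Module.finrank ℝ (Fin n → ℝ) = n := by simp
    have h3 : Module.finrank ℝ (LinearMap.range f) = n - 1 := hrank
    omega
  have hvmem : v ∈ LinearMap.ker f := by
    ext ν
    simpa [hf, Matrix.mulVecLin, Matrix.mulVec, dotProduct] using hv ν
  have hδmem : δ ∈ LinearMap.ker f := by
    ext ν
    simpa [hf, Matrix.mulVecLin, Matrix.mulVec, dotProduct] using hδ ν
  set vK : LinearMap.ker f := ⟨v, hvmem⟩
  have hvK : vK ≠ 0 := by simpa [vK, Subtype.ext_iff] using hv0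
  have hspan : Submodule.span ℝ {vK} = ⊤ := by
    apply Submodule.eq_top_of_finrank_eq
    rw [finrank_span_singleton hvK, hker]
  have hδspan : (⟨δ, hδmem⟩ : LinearMap.ker f) ∈ Submodule.span ℝ {vK} := by
    rw [hspan]; trivial
  obtain ⟨c, hc⟩ := Submodule.mem_span_singleton.mp hδspan
  have hδv : δ = c • v := by
    have := congrArg Subtype.val hc
    simpa [vK] using this.symm
  subst hδv
  have := skew_sum_zero A hA v
  calc ∑ i, ∑ j, A i j * v j * (c • v) i
      = c * ∑ i, ∑ j, A i j * v j * v i := by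
        rw [Finset.mul_sum]
        refine Finset.sum_congr rfl fun i _ => ?_
        rw [Finset.mul_sum]
        refine Finset.sum_congr rfl fun j _ => ?_
        simp [Pi.smul_apply]; ring
    _ = 0 := by rw [this, mul_zero]
end

section
/- Let a, c ∈ (Fin 3 → ℝ) with a ≠ 0. Then the following are equivalent: (i) for every vector v ∈ (Fin 3 → ℝ) with ⟨a, v⟩ = 0 there exists ρ ∈ ℝ such that c ×₃ v = ρ • a; (ii) ⟨a, c⟩ = 0. (With c playing the role of the curl ∇ ∧ a₁ of the constraint field a₁ at a point, this says that for a single linear constraint in ℝ³ the vector (∇ ∧ a₁) ∧ q̇ can be proportional to a₁ for all admissible velocities q̇ if and only if a₁ · (∇ ∧ a₁) = 0.) -/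
open BigOperators

/-- The cross product on `ℝ³` realized as `Fin 3 → ℝ`. -/
noncomputable def cross3 (u v : Fin 3 → ℝ) : Fin 3 → ℝ :=
  ![u 1 * v 2 - u 2 * v 1, u 2 * v 0 - u 0 * v 2, u 0 * v 1 - u 1 * v 0]

/-- For a single linear constraint in `ℝ³` with coefficient vector `a ≠ 0` and a vector
`c` (playing the role of `∇ ∧ a`): the vector `c ×₃ v` is proportional to `a` for all
admissible velocities `v` (those with `⟨a, v⟩ = 0`) if and only if `⟨a, c⟩ = 0`. -/
theorem curl_cross_proportional_iff_orthogonal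
    (a c : Fin 3 → ℝ) (ha : a ≠ 0) :
    (∀ v : Fin 3 → ℝ, (∑ i, a i * v i = 0) → ∃ ρ : ℝ, cross3 c v = ρ • a)
      ↔ ∑ i, a i * c i = 0 := by
  have haj : ∃ j, a j ≠ 0 := by
    by_contra h
    push_neg at h
    exact ha (funext h)
  constructor
  · intro h
    obtain ⟨ρ₀, h0⟩ := h ![0, a 2, -(a 1)] (by simp [Fin.sum_univ_three]; ring)
    obtain ⟨ρ₁, h1⟩ := h ![-(a 2), 0, a 0] (by simp [Fin.sum_univ_three]; ring)
    have e00 := congrFun h0 0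
    have e01 := congrFun h0 1
    have e02 := congrFun h0 2
    have e10 := congrFun h1 0
    have e11 := congrFun h1 1
    simp [cross3] at e00 e01 e02 e10 e11
    rw [Fin.sum_univ_three]
    obtain ⟨j, hj⟩ := haj
    fin_cases j
    · rcases e10 with h' | h'
      · rw [← h'] at e11; linarith
      · exact absurd h' hj
    · rcases e01 with h' | h'
      · rw [← h'] at e00; linarith
      · exact absurd h' hj
    · rcases e02 with h' | h'
      · rw [← h'] at e00; linarith
      · exact absurd h' hj
  · intro hc v hv
    rw [Fin.sum_univ_three] at hc hv
    have hS : a 0 ^ 2 + a 1 ^ 2 + a 2 ^ 2 ≠ 0 := by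
      obtain ⟨j, hj⟩ := haj
      fin_cases j <;> positivity
    refine ⟨(a 0 * (c 1 * v 2 - c 2 * v 1) + a 1 * (c 2 * v 0 - c 0 * v 2)
        + a 2 * (c 0 * v 1 - c 1 * v 0)) / (a 0 ^ 2 + a 1 ^ 2 + a 2 ^ 2), ?_⟩
    funext i
    fin_cases i <;>
      simp [cross3, div_mul_eq_mul_div, eq_div_iff hS]
    · linear_combination (a 1 * v 2 - a 2 * v 1) * hc + (a 2 * c 1 - a 1 * c 2) * hv
    · linear_combination (a 2 * v 0 - a 0 * v 2) * hc + (a 0 * c 2 - a 2 * c 0) * hv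
    · linear_combination (a 0 * v 1 - a 1 * v 0) * hc + (a 1 * c 0 - a 0 * c 1) * hv
end
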